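/- arXiv:1302.5261 — 5 statements merged into one kernel-verified Lean document; each statement's English description precedes it below -/
import Mathlib

section
/- For all integers l ≥ 1, −l ≤ m ≤ l, and all x ∈ (−1, 1), F_{lm}(x) = [−(l x + m) U_{lm}(x) + (2l + 1) ξ_{lm} U_{l−1,m}(x)] / (√(l(l+1)) √(1 − x^2)), where ξ_{lm} := √((l+m)(l−m)/((2l+1)(2l−1))). -/
open MeasureTheory

open Polynomial

noncomputable def gf (k : ℕ) : ℝ → ℝ := fun y => (y ^ 2 - 1) ^ k

lemma itd_poly (p : ℝ[X]) (n : ℕ) :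
    iteratedDeriv n (fun x => p.eval x) = fun x => (derivative^[n] p).eval x := by
  induction n with
  | zero => simp
  | succ n ih =>
    rw [iteratedDeriv_succ, ih, Function.iterate_succ_apply']
    funext x
    exact (Polynomial.hasDerivAt _ x).deriv

lemma gf_poly (k : ℕ) : gf k = fun x => ((X ^ 2 - 1 : ℝ[X]) ^ k).eval x := by
  funext x; simp [gf]

lemma hasDerivAt_itd (k n : ℕ) (x : ℝ) :
    HasDerivAt (iteratedDeriv n (gf k)) (iteratedDeriv (n + 1) (gf k) x) x := by
  rw [gf_poly, itd_poly, itd_poly, Function.iterate_succ_apply']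
  exact Polynomial.hasDerivAt _ x

lemma gf_succ (k : ℕ) (x : ℝ) : gf (k+1) x = (x^2 - 1) * gf k x := by
  simp [gf, pow_succ, mul_comm]

lemma deriv_gf (k : ℕ) (x : ℝ) :
    HasDerivAt (gf (k+1)) (2*((k:ℝ)+1)*x*gf k x) x := by
  have h := (((hasDerivAt_pow 2 x).sub_const 1).pow (k+1))
  convert h using 1
  case e'_4 => rfl
  case e'_5 => rfl
  case e'_8 => rfl
  simp [gf]
  ring

lemma coeff_pred (c : ℝ) (n : ℕ) (f : ℝ → ℝ) (x : ℝ) :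
    (n:ℝ) * c * iteratedDeriv (n-1+1) f x = (n:ℝ) * c * iteratedDeriv n f x := by
  cases n with
  | zero => simp
  | succ p => norm_num

lemma legG (k n : ℕ) :
    ∀ x : ℝ, (x^2 - 1) * iteratedDeriv (n+1) (gf (k+1)) x
      = 2*((k:ℝ)+1-n)*x*iteratedDeriv n (gf (k+1)) x
        + (n:ℝ)*(2*(k:ℝ)+2-(n:ℝ)+1)*iteratedDeriv (n-1) (gf (k+1)) x := by
  induction n with
  | zero =>
    intro x
    have h1 : iteratedDeriv 1 (gf (k+1)) x = 2*((k:ℝ)+1)*x*gf k x := by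
      rw [iteratedDeriv_one]; exact (deriv_gf k x).deriv
    simp only [iteratedDeriv_zero, Nat.cast_zero, h1]
    rw [gf_succ]
    ring
  | succ n ih =>
    intro x
    have hL : HasDerivAt (fun x : ℝ => (x^2 - 1) * iteratedDeriv (n+1) (gf (k+1)) x)
        (2*x*iteratedDeriv (n+1) (gf (k+1)) x + (x^2-1)*iteratedDeriv (n+2) (gf (k+1)) x) x := by
      have := ((hasDerivAt_pow 2 x).sub_const 1).mul (hasDerivAt_itd (k+1) (n+1) x)
      convert this using 1
      case e'_4 => rfl
      case e'_5 => rfl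
      case e'_8 => rfl
      ring
    have h1 := ((hasDerivAt_id x).mul (hasDerivAt_itd (k+1) n x)).const_mul (2*((k:ℝ)+1-n))
    have h2 := (hasDerivAt_itd (k+1) (n-1) x).const_mul ((n:ℝ)*(2*(k:ℝ)+2-(n:ℝ)+1))
    have hR := h1.add h2
    simp only [id_eq, one_mul] at hR
    have hIH : (fun x : ℝ => (x^2 - 1) * iteratedDeriv (n+1) (gf (k+1)) x)
        = fun x : ℝ => 2*((k:ℝ)+1-n)*(x*iteratedDeriv n (gf (k+1)) x)
          + (n:ℝ)*(2*(k:ℝ)+2-(n:ℝ)+1)*iteratedDeriv (n-1) (gf (k+1)) x := by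
      funext y; rw [ih y]; ring
    have hd := congrFun (congrArg deriv hIH) x
    rw [hL.deriv] at hd; replace hd := hd.trans hR.deriv; rw [coeff_pred] at hd
    have hsub : (n : ℕ) + 1 - 1 = n := rfl
    rw [hsub]
    push_cast
    linear_combination hd

lemma legH (k n : ℕ) :
    ∀ x : ℝ, x * iteratedDeriv (n+1) (gf (k+1)) x
      = 2*((k:ℝ)+1) * iteratedDeriv n (gf k) x
        + (2*(k:ℝ)+2-(n:ℝ)) * iteratedDeriv n (gf (k+1)) x := by
  induction n with
  | zero =>
    intro x
    have h1 : iteratedDeriv 1 (gf (k+1)) x = 2*((k:ℝ)+1)*x*gf k x := by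
      rw [iteratedDeriv_one]; exact (deriv_gf k x).deriv
    simp only [iteratedDeriv_zero, Nat.cast_zero, h1]
    rw [gf_succ]
    ring
  | succ n ih =>
    intro x
    have hL : HasDerivAt (fun x : ℝ => x * iteratedDeriv (n+1) (gf (k+1)) x)
        (iteratedDeriv (n+1) (gf (k+1)) x + x * iteratedDeriv (n+2) (gf (k+1)) x) x := by
      have := (hasDerivAt_id x).mul (hasDerivAt_itd (k+1) (n+1) x)
      convert this using 1
      case e'_4 => rfl
      case e'_5 => rfl
      case e'_8 => rfl
      simp
    have h1 := (hasDerivAt_itd k n x).const_mul (2*((k:ℝ)+1))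
    have h2 := (hasDerivAt_itd (k+1) n x).const_mul (2*(k:ℝ)+2-(n:ℝ))
    have hR := h1.add h2
    have hIH : (fun x : ℝ => x * iteratedDeriv (n+1) (gf (k+1)) x)
        = fun x : ℝ => 2*((k:ℝ)+1) * iteratedDeriv n (gf k) x
          + (2*(k:ℝ)+2-(n:ℝ)) * iteratedDeriv n (gf (k+1)) x := funext ih
    have hd := congrFun (congrArg deriv hIH) x
    rw [hL.deriv] at hd; replace hd := hd.trans hR.deriv
    push_cast
    linear_combination hd


/-- The (unnormalized) associated Legendre function
`P_l^m(x) = ((−1)^m / (2^l l!)) (1 − x^2)^{m/2} (d/dx)^{l+m} (x^2 − 1)^l`. -/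
noncomputable def Plm (l m : ℤ) (x : ℝ) : ℝ :=
  ((-1 : ℝ) ^ m / ((2 : ℝ) ^ l * (l.toNat.factorial : ℝ))) *
    (1 - x ^ 2) ^ ((m : ℝ) / 2) *
    iteratedDeriv (l + m).toNat (fun y : ℝ => (y ^ 2 - 1) ^ l) x

lemma Plm_fun (l m : ℤ) (hl : 0 ≤ l) : Plm l m = fun x : ℝ =>
    ((-1 : ℝ) ^ m / ((2 : ℝ) ^ l * (l.toNat.factorial : ℝ))) *
      ((1 - x ^ 2) ^ ((m : ℝ) / 2) * iteratedDeriv (l + m).toNat (gf l.toNat) x) := by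
  funext x
  have hg : (fun y : ℝ => (y ^ 2 - 1) ^ l) = gf l.toNat := by
    funext y
    show (y ^ 2 - 1) ^ l = (y ^ 2 - 1) ^ l.toNat
    rw [← zpow_natCast (y ^ 2 - 1) l.toNat, Int.toNat_of_nonneg hl]
  rw [Plm, hg, mul_assoc]

lemma hasDerivAt_Plm (l m : ℤ) (hl : 0 ≤ l) (x : ℝ) (hs : 0 < 1 - x ^ 2) :
    HasDerivAt (Plm l m)
      (((-1 : ℝ) ^ m / ((2 : ℝ) ^ l * (l.toNat.factorial : ℝ))) *
        (-(m : ℝ) * x * (1 - x ^ 2) ^ ((m : ℝ) / 2 - 1) *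
            iteratedDeriv (l + m).toNat (gf l.toNat) x +
          (1 - x ^ 2) ^ ((m : ℝ) / 2) *
            iteratedDeriv ((l + m).toNat + 1) (gf l.toNat) x)) x := by
  rw [Plm_fun l m hl]
  have h1 : HasDerivAt (fun y : ℝ => 1 - y ^ 2) (-(2 * x ^ 1)) x :=
    (hasDerivAt_pow 2 x).const_sub 1
  have h2 := h1.rpow_const (p := (m : ℝ) / 2) (Or.inl hs.ne')
  have h3 := hasDerivAt_itd l.toNat (l + m).toNat x
  have h4 := (h2.mul h3).const_mul ((-1 : ℝ) ^ m / ((2 : ℝ) ^ l * (l.toNat.factorial : ℝ)))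
  convert h4 using 1
  case e'_4 => rfl
  case e'_5 => rfl
  case e'_8 => rfl
  ring

lemma Plm_rec (l m : ℤ) (hl : 1 ≤ l) (hm₁ : -l ≤ m) (hm₂ : m ≤ l) (x : ℝ)
    (hx1 : -1 < x) (hx2 : x < 1) :
    (1 - x ^ 2) * deriv (Plm l m) x
      = ((l : ℝ) + (m : ℝ)) * Plm (l - 1) m x - (l : ℝ) * x * Plm l m x := by
  have hs : 0 < 1 - x ^ 2 := by nlinarith
  have hkk : l.toNat = (l - 1).toNat + 1 := by omega
  have hcast_k : (((l - 1).toNat : ℕ) : ℝ) = (l : ℝ) - 1 := by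
    have h : (((l - 1).toNat : ℕ) : ℤ) = l - 1 := by omega
    exact_mod_cast h
  have hcast_n : (((l + m).toNat : ℕ) : ℝ) = (l : ℝ) + m := by
    have h : (((l + m).toNat : ℕ) : ℤ) = l + m := by omega
    exact_mod_cast h
  have hu : (1 - x ^ 2) * (1 - x ^ 2) ^ ((m : ℝ) / 2 - 1) = (1 - x ^ 2) ^ ((m : ℝ) / 2) := by
    rw [Real.rpow_sub hs, Real.rpow_one]
    field_simp
  have hA : (-1 : ℝ) ^ m / ((2 : ℝ) ^ (l - 1) * ((l - 1).toNat.factorial : ℝ))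
      = 2 * (l : ℝ) * ((-1 : ℝ) ^ m / ((2 : ℝ) ^ l * (l.toNat.factorial : ℝ))) := by
    have h2 : (2 : ℝ) ^ l = (2 : ℝ) ^ (l - 1) * 2 := by
      rw [← zpow_add_one₀ (by norm_num : (2:ℝ) ≠ 0) (l - 1)]
      norm_num
    have hf : (l.toNat.factorial : ℝ) = (l : ℝ) * ((l - 1).toNat.factorial : ℝ) := by
      rw [hkk, Nat.factorial_succ]
      push_cast
      rw [hcast_k]
      ring
    rw [h2, hf]
    have hl0 : (l : ℝ) ≠ 0 := by positivity
    have h2l : (2 : ℝ) ^ (l - 1) ≠ 0 := by positivity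
    have hfa : ((l - 1).toNat.factorial : ℝ) ≠ 0 := by positivity
    field_simp
  rw [(hasDerivAt_Plm l m (by omega) x hs).deriv,
    Plm_fun l m (by omega), Plm_fun (l - 1) m (by omega)]
  simp only []
  rw [show (l - 1 + m).toNat = (l + m).toNat - 1 from by omega]
  rcases Nat.eq_zero_or_pos (l + m).toNat with hn0 | hn1
  · -- m = -l case
    have hm : (m : ℝ) = -(l : ℝ) := by
      have h : ((m : ℤ) : ℝ) = ((-l : ℤ) : ℝ) := by
        norm_cast
        omega
      push_cast at h
      exact h
    have hG := legG (l - 1).toNat 0 x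
    rw [← hkk, hcast_k] at hG
    push_cast at hG
    rw [hn0]
    linear_combination
      (-(((-1 : ℝ) ^ m / ((2 : ℝ) ^ l * (l.toNat.factorial : ℝ))) * (m : ℝ) * x *
          iteratedDeriv 0 (gf l.toNat) x)) * hu +
      (-(((-1 : ℝ) ^ m / ((2 : ℝ) ^ l * (l.toNat.factorial : ℝ))) *
          (1 - x ^ 2) ^ ((m : ℝ) / 2))) * hG +
      (-(((-1 : ℝ) ^ m / ((2 : ℝ) ^ (l - 1) * ((l - 1).toNat.factorial : ℝ))) *
            (1 - x ^ 2) ^ ((m : ℝ) / 2) * iteratedDeriv (0 - 1) (gf (l - 1).toNat) x +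
          ((-1 : ℝ) ^ m / ((2 : ℝ) ^ l * (l.toNat.factorial : ℝ))) *
            (1 - x ^ 2) ^ ((m : ℝ) / 2) * x * iteratedDeriv 0 (gf l.toNat) x)) * hm
  · -- main case
    have hG := legG (l - 1).toNat (l + m).toNat x
    have hH := legH (l - 1).toNat ((l + m).toNat - 1) x
    rw [show (l + m).toNat - 1 + 1 = (l + m).toNat from by omega] at hH
    have hcast_n1 : (((l + m).toNat - 1 : ℕ) : ℝ) = (l : ℝ) + m - 1 := by
      have h : (((l + m).toNat - 1 : ℕ) : ℤ) = l + m - 1 := by omega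
      exact_mod_cast h
    rw [← hkk, hcast_k, hcast_n] at hG
    rw [← hkk, hcast_k, hcast_n1] at hH
    linear_combination
      (-(((-1 : ℝ) ^ m / ((2 : ℝ) ^ l * (l.toNat.factorial : ℝ))) * (m : ℝ) * x *
          iteratedDeriv (l + m).toNat (gf l.toNat) x)) * hu +
      (-(((-1 : ℝ) ^ m / ((2 : ℝ) ^ l * (l.toNat.factorial : ℝ))) *
          (1 - x ^ 2) ^ ((m : ℝ) / 2))) * hG +
      (((-1 : ℝ) ^ m / ((2 : ℝ) ^ l * (l.toNat.factorial : ℝ))) *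
          (1 - x ^ 2) ^ ((m : ℝ) / 2) * ((l : ℝ) + m)) * hH +
      (-(((l : ℝ) + m) * (1 - x ^ 2) ^ ((m : ℝ) / 2) *
          iteratedDeriv ((l + m).toNat - 1) (gf (l - 1).toNat) x)) * hA

lemma itd_gf_zero (k n : ℕ) (h : 2 * k < n) : iteratedDeriv n (gf k) = 0 := by
  rw [gf_poly, itd_poly]
  have hdeg : ((X ^ 2 - 1 : ℝ[X]) ^ k).natDegree < n := by
    refine lt_of_le_of_lt ?_ h
    refine (Polynomial.natDegree_pow_le).trans ?_
    have : (X ^ 2 - 1 : ℝ[X]).natDegree ≤ 2 := by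
      compute_degree
    nlinarith [this]
  rw [Polynomial.iterate_derivative_eq_zero hdeg]
  funext x
  simp


/-- The normalization factor `c_{lm} = √((2l+1)/2 · (l−m)!/(l+m)!)`. -/
noncomputable def clm (l m : ℤ) : ℝ :=
  Real.sqrt ((2 * (l : ℝ) + 1) / 2 * ((l - m).toNat.factorial : ℝ) /
    ((l + m).toNat.factorial : ℝ))

/-- The normalized associated Legendre function `U_{lm} = c_{lm} P_l^m`,
with the convention `U_{lm} = 0` when `|m| > l`. -/
noncomputable def Ulm (l m : ℤ) (x : ℝ) : ℝ :=
  if |m| ≤ l then clm l m * Plm l m x else 0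

/-- The function of Sheppard and Török
`F_{lm}(x) = (1/√(l(l+1))) [√(1−x²) U_{lm}'(x) − (m/√(1−x²)) U_{lm}(x)]`. -/
noncomputable def Flm (l m : ℤ) (x : ℝ) : ℝ :=
  (1 / Real.sqrt ((l : ℝ) * ((l : ℝ) + 1))) *
    (Real.sqrt (1 - x ^ 2) * deriv (Ulm l m) x -
      ((m : ℝ) / Real.sqrt (1 - x ^ 2)) * Ulm l m x)

/-- The factor `ξ_{lm} = √((l+m)(l−m)/((2l+1)(2l−1)))`. -/
noncomputable def xilm (l m : ℤ) : ℝ :=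
  Real.sqrt (((l : ℝ) + m) * ((l : ℝ) - m) / ((2 * (l : ℝ) + 1) * (2 * (l : ℝ) - 1)))

lemma coeff_id (l m : ℤ) (hl : 1 ≤ l) (hm : |m| ≤ l - 1) :
    ((l : ℝ) + m) * clm l m = (2 * (l : ℝ) + 1) * xilm l m * clm (l - 1) m := by
  obtain ⟨hma, hmb⟩ := abs_le.mp hm
  have h1 : (0 : ℝ) < (l : ℝ) + m := by
    have : (0 : ℤ) < l + m := by omega
    exact_mod_cast this
  have h2 : (0 : ℝ) < (l : ℝ) - m := by
    have : (0 : ℤ) < l - m := by omega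
    exact_mod_cast this
  have h3 : (0 : ℝ) < 2 * (l : ℝ) - 1 := by
    have : (0 : ℤ) < 2 * l - 1 := by omega
    exact_mod_cast this
  have h4 : (0 : ℝ) < 2 * (l : ℝ) + 1 := by positivity
  have hfp : ∀ j : ℕ, (0 : ℝ) < (j.factorial : ℝ) := fun j => by positivity
  -- factorial recursions
  have hfm : ((l + m).toNat.factorial : ℝ) = ((l : ℝ) + m) * ((l - 1 + m).toNat.factorial : ℝ) := by
    rw [show (l + m).toNat = (l - 1 + m).toNat + 1 from by omega, Nat.factorial_succ]
    push_cast
    have : (((l - 1 + m).toNat : ℕ) : ℝ) = (l : ℝ) + m - 1 := by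
      have h : (((l - 1 + m).toNat : ℕ) : ℤ) = l + m - 1 := by omega
      exact_mod_cast h
    rw [this]; ring
  have hfm' : ((l - m).toNat.factorial : ℝ) = ((l : ℝ) - m) * ((l - 1 - m).toNat.factorial : ℝ) := by
    rw [show (l - m).toNat = (l - 1 - m).toNat + 1 from by omega, Nat.factorial_succ]
    push_cast
    have : (((l - 1 - m).toNat : ℕ) : ℝ) = (l : ℝ) - m - 1 := by
      have h : (((l - 1 - m).toNat : ℕ) : ℤ) = l - m - 1 := by omega
      exact_mod_cast h
    rw [this]; ring
  rw [clm, clm, xilm]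
  rw [show ((l : ℤ) - 1 - m) = l - 1 - m from rfl, show ((l : ℤ) - 1 + m) = l - 1 + m from rfl]
  push_cast
  rw [show ((l : ℝ) + m) = Real.sqrt (((l : ℝ) + m) ^ 2) from (Real.sqrt_sq h1.le).symm,
    show (2 * (l : ℝ) + 1) = Real.sqrt ((2 * (l : ℝ) + 1) ^ 2) from (Real.sqrt_sq h4.le).symm]
  rw [← Real.sqrt_mul (by positivity), ← Real.sqrt_mul (by positivity),
    ← Real.sqrt_mul (by positivity)]
  congr 1
  rw [hfm, hfm']
  rw [Real.sqrt_sq h1.le, Real.sqrt_sq h4.le, show 2 * ((l : ℝ) - 1) + 1 = 2 * (l : ℝ) - 1 by ring]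
  field_simp [h3.ne']
  rw [div_self (by linarith)]

lemma Ulm_rec (l m : ℤ) (hl : 1 ≤ l) (hm₁ : -l ≤ m) (hm₂ : m ≤ l) (x : ℝ)
    (hx1 : -1 < x) (hx2 : x < 1) :
    (1 - x ^ 2) * deriv (Ulm l m) x
      = -(l : ℝ) * x * Ulm l m x + (2 * (l : ℝ) + 1) * xilm l m * Ulm (l - 1) m x := by
  have hs : 0 < 1 - x ^ 2 := by nlinarith
  have hml : |m| ≤ l := abs_le.mpr ⟨hm₁, hm₂⟩
  have hUfun : Ulm l m = fun y => clm l m * Plm l m y := by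
    funext y; rw [Ulm, if_pos hml]
  have hdU : deriv (Ulm l m) x = clm l m * deriv (Plm l m) x := by
    rw [hUfun, ((hasDerivAt_Plm l m (by omega) x hs).const_mul (clm l m)).deriv,
      (hasDerivAt_Plm l m (by omega) x hs).deriv]
  have hP := Plm_rec l m hl hm₁ hm₂ x hx1 hx2
  have key : clm l m * (((l : ℝ) + m) * Plm (l - 1) m x)
      = (2 * (l : ℝ) + 1) * xilm l m * Ulm (l - 1) m x := by
    by_cases hcase : |m| ≤ l - 1
    · have hU' : Ulm (l - 1) m x = clm (l - 1) m * Plm (l - 1) m x := by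
        rw [Ulm, if_pos hcase]
      rw [hU']
      linear_combination (Plm (l - 1) m x) * coeff_id l m hl hcase
    · have hU' : Ulm (l - 1) m x = 0 := by rw [Ulm, if_neg hcase]
      rw [hU', mul_zero]
      have hcases : m = l ∨ m = -l := by
        by_contra hc
        push_neg at hc
        exact hcase (abs_le.mpr ⟨by omega, by omega⟩)
      rcases hcases with h | h
      · rw [h]
        have hz : iteratedDeriv (l - 1 + l).toNat (gf (l - 1).toNat) = 0 :=
          itd_gf_zero _ _ (by omega)
        have hP0 : Plm (l - 1) l x = 0 := by
          rw [Plm_fun (l - 1) l (by omega)]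
          simp only [hz, Pi.zero_apply, mul_zero]
        rw [hP0]
        ring
      · rw [h]
        have h0 : ((l : ℝ) + ((-l : ℤ) : ℝ)) = 0 := by push_cast; ring
        rw [h0]
        ring
  rw [hdU, show Ulm l m x = clm l m * Plm l m x from by rw [hUfun]]
  linear_combination (clm l m) * hP + key


/-- Alternative expression of `F_{lm}` in terms of `U_{lm}` and `U_{l−1,m}`. -/
theorem Flm_eq_lower (l m : ℤ) (hl : 1 ≤ l) (hm₁ : -l ≤ m) (hm₂ : m ≤ l)
    (x : ℝ) (hx : x ∈ Set.Ioo (-1 : ℝ) 1) :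
    Flm l m x =
      (-((l : ℝ) * x + m) * Ulm l m x + (2 * (l : ℝ) + 1) * xilm l m * Ulm (l - 1) m x) /
        (Real.sqrt ((l : ℝ) * ((l : ℝ) + 1)) * Real.sqrt (1 - x ^ 2)) := by
  obtain ⟨hx1, hx2⟩ := hx
  have hs : 0 < 1 - x ^ 2 := by nlinarith
  have ht : 0 < Real.sqrt (1 - x ^ 2) := Real.sqrt_pos.mpr hs
  have hl0 : (0 : ℝ) < (l : ℝ) := by exact_mod_cast hl
  have hL : 0 < Real.sqrt ((l : ℝ) * ((l : ℝ) + 1)) := Real.sqrt_pos.mpr (by positivity)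
  have hrec := Ulm_rec l m hl hm₁ hm₂ x hx1 hx2
  have hts : Real.sqrt (1 - x ^ 2) * Real.sqrt (1 - x ^ 2) = 1 - x ^ 2 :=
    Real.mul_self_sqrt hs.le
  rw [Flm, eq_div_iff (by positivity)]
  field_simp
  linear_combination hrec + (deriv (Ulm l m) x) * hts
end

section
/- For all integers l ≥ 1, −l ≤ m ≤ l, and all x ∈ (−1, 1), F_{lm}(x) = [((l + 1) x − m) U_{lm}(x) − (2l + 1) ξ_{l+1,m} U_{l+1,m}(x)] / (√(l(l+1)) √(1 − x^2)), where ξ_{lm} := √((l+m)(l−m)/((2l+1)(2l−1))). -/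
open MeasureTheory

namespace FlmAux

open Polynomial

lemma iterD_add (k : ℕ) (p q : ℝ[X]) :
    derivative^[k] (p + q) = derivative^[k] p + derivative^[k] q := by
  induction k generalizing p q with
  | zero => rfl
  | succ k ih => rw [Function.iterate_succ_apply, Function.iterate_succ_apply,
      Function.iterate_succ_apply, derivative_add, ih]

lemma iterD_X_mul (k : ℕ) (q : ℝ[X]) :
    derivative^[k] (X * q) = X * derivative^[k] q + C (k : ℝ) * derivative^[k-1] q := by
  induction k generalizing q with
  | zero => simp
  | succ k ih =>
    rw [Function.iterate_succ_apply, derivative_mul, derivative_X, one_mul, iterD_add, ih]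
    match k with
    | 0 => simp; ring
    | Nat.succ j =>
      rw [← Function.iterate_succ_apply (f := (⇑derivative)) (j+1) q,
          show j + 1 - 1 = j from rfl,
          ← Function.iterate_succ_apply (f := (⇑derivative)) j q,
          show j + 1 + 1 - 1 = j + 1 from rfl]
      have : ((j + 1 + 1 : ℕ) : ℝ) = ((j+1 : ℕ) : ℝ) + 1 := by push_cast; ring
      rw [this, map_add, map_one]
      ring

lemma ode (n : ℕ) : (X^2 - 1) * derivative ((X^2 - 1 : ℝ[X])^n) = C (2*n : ℝ) * (X * (X^2-1)^n) := by
  cases n with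
  | zero => simp
  | succ n =>
    rw [derivative_pow]
    simp only [derivative_sub, derivative_X_pow, derivative_one, Nat.add_sub_cancel, C_mul]
    push_cast [C_add, C_mul]
    ring

lemma recP (n : ℕ) : ∀ k : ℕ, (X^2 - 1) * derivative^[k+1] ((X^2 - 1 : ℝ[X])^n) =
    C (2*((n:ℝ) - k)) * (X * derivative^[k] ((X^2-1)^n)) +
    C ((k:ℝ)*(2*n - k + 1)) * derivative^[k-1] ((X^2-1)^n) := by
  intro k
  induction k with
  | zero => simpa using ode n
  | succ k ih =>
    have h' := congrArg derivative ih
    simp only [derivative_mul, derivative_add, derivative_sub, derivative_X_pow, derivative_one,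
      derivative_C, derivative_X, pow_one, ← Function.iterate_succ_apply' (f := (⇑derivative))] at h'
    cases k with
    | zero =>
      simp only [Nat.cast_zero, zero_mul, map_zero, zero_mul, add_zero, Nat.cast_one] at h' ⊢
      push_cast at h' ⊢
      simp only [C_add, C_sub, C_mul, C_1, map_ofNat, C_0] at h' ⊢
      linear_combination h'
    | succ j =>
      have hj : j + 1 - 1 = j := rfl
      rw [hj] at h'
      push_cast at h' ⊢
      simp only [C_add, C_sub, C_mul, C_1, map_ofNat, C_0] at h' ⊢
      linear_combination h'

lemma dstep (n : ℕ) : derivative ((X^2-1:ℝ[X])^(n+1)) = C (2*((n:ℝ)+1)) * (X * (X^2-1)^n) := by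
  rw [derivative_pow]
  simp only [derivative_sub, derivative_X_pow, derivative_one, Nat.add_sub_cancel, C_mul]
  push_cast [C_add, C_mul, C_1, map_ofNat]
  ring

lemma stepL (n k : ℕ) : derivative^[k+1] ((X^2-1 : ℝ[X])^(n+1)) =
    C (2*((n:ℝ)+1)) * (X * derivative^[k] ((X^2-1)^n) + C (k:ℝ) * derivative^[k-1] ((X^2-1)^n)) := by
  rw [Function.iterate_succ_apply, dstep, iterate_derivative_C_mul, iterD_X_mul]

lemma iterDeriv_eval (p : ℝ[X]) (k : ℕ) :
    iteratedDeriv k (fun y : ℝ => p.eval y) = fun y => (derivative^[k] p).eval y := by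
  induction k with
  | zero => rfl
  | succ k ih =>
    rw [iteratedDeriv_succ, ih, Function.iterate_succ_apply']
    funext y
    exact Polynomial.deriv _

lemma Plm_eq (l m : ℤ) (hl : 0 ≤ l) :
    Plm l m = fun x : ℝ => ((-1:ℝ)^m / ((2:ℝ)^l * (l.toNat.factorial : ℝ))) *
      ((1 - x^2) ^ ((m:ℝ)/2) * ((derivative^[(l+m).toNat] ((X^2-1 : ℝ[X])^l.toNat)).eval x)) := by
  funext x
  unfold Plm
  have h1 : (fun y : ℝ => (y^2-1)^l) = fun y : ℝ => ((X^2-1 : ℝ[X])^l.toNat).eval y := by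
    funext y
    have : ((y:ℝ)^2 - 1)^l = (y^2-1)^l.toNat := by
      conv_lhs => rw [← Int.toNat_of_nonneg hl]
      exact zpow_natCast _ _
    rw [this]
    simp
  rw [h1, iterDeriv_eval]
  ring

lemma Plm_hasDerivAt (l m : ℤ) (hl : 0 ≤ l) {x : ℝ} (hx : x ∈ Set.Ioo (-1:ℝ) 1) :
    HasDerivAt (Plm l m)
      (((-1:ℝ)^m / ((2:ℝ)^l * (l.toNat.factorial : ℝ))) *
        ((((m:ℝ)/2) * (1 - x^2) ^ ((m:ℝ)/2 - 1) * (-2*x)) *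
            ((derivative^[(l+m).toNat] ((X^2-1 : ℝ[X])^l.toNat)).eval x) +
          (1 - x^2) ^ ((m:ℝ)/2) *
            ((derivative^[(l+m).toNat + 1] ((X^2-1 : ℝ[X])^l.toNat)).eval x))) x := by
  obtain ⟨hx1, hx2⟩ := hx
  have h1x : (0:ℝ) < 1 - x^2 := by nlinarith
  rw [Plm_eq l m hl]
  have hu : HasDerivAt (fun y : ℝ => 1 - y^2) (-2*x) x := by
    simpa using ((hasDerivAt_pow 2 x).const_sub 1)
  have hr : HasDerivAt (fun y : ℝ => (1 - y^2) ^ ((m:ℝ)/2))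
      ((((m:ℝ)/2) * (1 - x^2) ^ ((m:ℝ)/2 - 1)) * (-2*x)) x := by
    exact (Real.hasDerivAt_rpow_const (Or.inl h1x.ne')).comp x hu
  have hg : HasDerivAt (fun y : ℝ => (derivative^[(l+m).toNat] ((X^2-1 : ℝ[X])^l.toNat)).eval y)
      ((derivative^[(l+m).toNat + 1] ((X^2-1 : ℝ[X])^l.toNat)).eval x) x := by
    rw [Function.iterate_succ_apply']
    exact Polynomial.hasDerivAt _ x
  have := ((hr.mul hg).const_mul ((-1:ℝ)^m / ((2:ℝ)^l * (l.toNat.factorial : ℝ))))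
  convert this using 1
  all_goals rfl

lemma Plm_rec (l m : ℤ) (hl : 1 ≤ l) (hm₁ : -l ≤ m) (hm₂ : m ≤ l) {x : ℝ}
    (hx : x ∈ Set.Ioo (-1:ℝ) 1) :
    (1 - x^2) * deriv (Plm l m) x =
      (((l:ℝ)+1)*x) * Plm l m x - ((l:ℝ) - (m:ℝ) + 1) * Plm (l+1) m x := by
  obtain ⟨hx1, hx2⟩ := hx
  have h1x : (0:ℝ) < 1 - x^2 := by nlinarith
  have hl0 : (0:ℤ) ≤ l := by omega
  have hl0' : (0:ℤ) ≤ l + 1 := by omega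
  set n := l.toNat with hn
  set k := (l+m).toNat with hk
  have hnl : ((n:ℝ)) = (l:ℝ) := by
    rw [hn]; exact_mod_cast Int.toNat_of_nonneg hl0
  have hkl : ((k:ℝ)) = (l:ℝ) + (m:ℝ) := by
    rw [hk]
    have : ((l+m).toNat : ℤ) = l + m := Int.toNat_of_nonneg (by omega)
    exact_mod_cast this
  have hn1 : (l+1).toNat = n + 1 := by omega
  have hk1 : (l+1+m).toNat = k + 1 := by omega
  set t1 := (1 - x^2) ^ ((m:ℝ)/2) with ht1
  set t2 := (1 - x^2) ^ ((m:ℝ)/2 - 1) with ht2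
  set G : ℕ → ℝ := fun j => (derivative^[j] ((X^2-1 : ℝ[X])^n)).eval x with hG
  set A := ((-1:ℝ)^m / ((2:ℝ)^l * (n.factorial : ℝ))) with hA
  set A' := ((-1:ℝ)^m / ((2:ℝ)^(l+1) * ((n+1).factorial : ℝ))) with hA'
  have hts : t2 * (1 - x^2) = t1 := by
    rw [ht2, ht1, ← Real.rpow_add_one h1x.ne']
    norm_num
  have hAA : A' * (2*((n:ℝ)+1)) = A := by
    rw [hA, hA', zpow_add_one₀ (two_ne_zero) l, Nat.factorial_succ]
    have h2l : ((2:ℝ)^l) ≠ 0 := zpow_ne_zero l two_ne_zero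
    have hf : ((n.factorial : ℝ)) ≠ 0 := Nat.cast_ne_zero.mpr n.factorial_ne_zero
    push_cast
    field_simp
  have hder : deriv (Plm l m) x = A * ((((m:ℝ)/2) * t2 * (-2*x)) * G k + t1 * G (k+1)) :=
    (Plm_hasDerivAt l m hl0 ⟨hx1, hx2⟩).deriv
  have hP : Plm l m x = A * (t1 * G k) := by rw [Plm_eq l m hl0]
  have hP' : Plm (l+1) m x = A' * (t1 * ((2*((n:ℝ)+1)) * (x * G k + (k:ℝ) * G (k-1)))) := by
    rw [Plm_eq (l+1) m hl0']
    have e1 : (l+1+m).toNat = k + 1 := hk1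
    have e2 : (l+1).toNat = n + 1 := hn1
    rw [e1, e2, stepL n k]
    simp only [eval_mul, eval_add, eval_C, eval_X, hG]
    rfl
  have hrec := congrArg (fun p : ℝ[X] => p.eval x) (recP n k)
  simp only [eval_mul, eval_add, eval_sub, eval_pow, eval_C, eval_X, eval_one] at hrec
  rw [hnl, hkl] at hrec
  rw [hnl, hkl] at hP'
  rw [hnl] at hAA
  have hrec' : (x^2 - 1) * G (k+1) =
      2*((l:ℝ) - ((l:ℝ)+(m:ℝ)))*(x * G k) + ((l:ℝ)+(m:ℝ))*(2*(l:ℝ) - ((l:ℝ)+(m:ℝ)) + 1)*G (k-1) := hrec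
  rw [hder, hP, hP']
  linear_combination (-(A:ℝ) * (m:ℝ) * x * G k) * hts + (- A * t1) * hrec' +
    ((((l:ℝ)-(m:ℝ)+1)) * t1 * (x * G k + ((l:ℝ)+(m:ℝ)) * G (k-1))) * hAA

set_option maxHeartbeats 1000000 in
lemma clm_rec (l m : ℤ) (hl : 1 ≤ l) (hm₁ : -l ≤ m) (hm₂ : m ≤ l) :
    (2*(l:ℝ)+1) * xilm (l+1) m * clm (l+1) m = ((l:ℝ) - (m:ℝ) + 1) * clm l m := by
  have hlr : (1:ℝ) ≤ (l:ℝ) := by exact_mod_cast hl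
  have hm1r : -(l:ℝ) ≤ (m:ℝ) := by exact_mod_cast hm₁
  have hm2r : (m:ℝ) ≤ (l:ℝ) := by exact_mod_cast hm₂
  have e3 : ((l+1)-m).toNat = (l-m).toNat + 1 := by omega
  have e4 : ((l+1)+m).toNat = (l+m).toNat + 1 := by omega
  have c1 : (((l-m).toNat : ℝ)) = (l:ℝ) - m := by
    have : ((l-m).toNat : ℤ) = l - m := Int.toNat_of_nonneg (by omega)
    exact_mod_cast this
  have c2 : (((l+m).toNat : ℝ)) = (l:ℝ) + m := by
    have : ((l+m).toNat : ℤ) = l + m := Int.toNat_of_nonneg (by omega)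
    exact_mod_cast this
  have hF1pos : (0:ℝ) < ((l-m).toNat.factorial : ℝ) := by positivity
  have hF2pos : (0:ℝ) < ((l+m).toNat.factorial : ℝ) := by positivity
  unfold clm xilm
  simp only [Int.cast_add, Int.cast_one, e3, e4]
  have r1 : (0:ℝ) ≤ ((l:ℝ) + 1 + ↑m) * ((l:ℝ) + 1 - ↑m) / ((2 * ((l:ℝ) + 1) + 1) * (2 * ((l:ℝ) + 1) - 1)) := by
    apply div_nonneg <;> nlinarith
  have r2 : (0:ℝ) ≤ (2 * ((l:ℝ) + 1) + 1) / 2 * (((l - m).toNat + 1).factorial : ℝ) / (((l + m).toNat + 1).factorial : ℝ) := by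
    positivity
  have r3 : (0:ℝ) ≤ (2 * (l:ℝ) + 1) / 2 * ((l - m).toNat.factorial : ℝ) / ((l + m).toNat.factorial : ℝ) := by
    positivity
  have h2l1 : (0:ℝ) ≤ 2*(l:ℝ)+1 := by linarith
  have hlm1 : (0:ℝ) ≤ (l:ℝ) - m + 1 := by linarith
  have key : ∀ a b : ℝ, 0 ≤ a → 0 ≤ b → a^2 = b^2 → a = b := by
    intro a b ha hb h
    nlinarith [sq_nonneg (a-b), sq_nonneg (a+b)]
  apply key
  · have := Real.sqrt_nonneg (((l:ℝ) + 1 + ↑m) * ((l:ℝ) + 1 - ↑m) / ((2 * ((l:ℝ) + 1) + 1) * (2 * ((l:ℝ) + 1) - 1)))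
    have := Real.sqrt_nonneg ((2 * ((l:ℝ) + 1) + 1) / 2 * (((l - m).toNat + 1).factorial : ℝ) / (((l + m).toNat + 1).factorial : ℝ))
    positivity
  · positivity
  rw [mul_pow, mul_pow, Real.sq_sqrt r1, Real.sq_sqrt r2, mul_pow, Real.sq_sqrt r3]
  rw [Nat.factorial_succ, Nat.factorial_succ]
  push_cast [c1, c2]
  have h1 : (2*(l:ℝ)+3) ≠ 0 := by linarith
  have h2 : (2*(l:ℝ)+1) ≠ 0 := by linarith
  have h3 : ((l:ℝ)+m+1) ≠ 0 := by linarith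
  have h4 : ((l:ℝ)-m+1) ≠ 0 := by linarith
  have h5 : (2*((l:ℝ)+1)+1) ≠ 0 := by linarith
  have h6 : (2*((l:ℝ)+1)-1) ≠ 0 := by linarith
  field_simp [h1, h2, h3, h4, h5, h6, hF1pos.ne', hF2pos.ne']
  ring

end FlmAux

/-- Alternative expression of `F_{lm}` in terms of `U_{lm}` and `U_{l+1,m}`. -/
theorem Flm_eq_upper (l m : ℤ) (hl : 1 ≤ l) (hm₁ : -l ≤ m) (hm₂ : m ≤ l)
    (x : ℝ) (hx : x ∈ Set.Ioo (-1 : ℝ) 1) :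
    Flm l m x =
      ((((l : ℝ) + 1) * x - m) * Ulm l m x -
          (2 * (l : ℝ) + 1) * xilm (l + 1) m * Ulm (l + 1) m x) /
        (Real.sqrt ((l : ℝ) * ((l : ℝ) + 1)) * Real.sqrt (1 - x ^ 2)) := by
  obtain ⟨hx1, hx2⟩ := hx
  have h1x : (0:ℝ) < 1 - x^2 := by nlinarith
  have hlr : (1:ℝ) ≤ (l:ℝ) := by exact_mod_cast hl
  have habs : |m| ≤ l := abs_le.mpr ⟨hm₁, hm₂⟩
  have habs1 : |m| ≤ l + 1 := by omega
  have hU : Ulm l m = fun y => clm l m * Plm l m y := by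
    funext y; simp [Ulm, habs]
  have hU1 : Ulm (l+1) m = fun y => clm (l+1) m * Plm (l+1) m y := by
    funext y; simp [Ulm, habs1]
  have ht : (0:ℝ) < Real.sqrt (1 - x^2) := Real.sqrt_pos.mpr h1x
  have hs : (0:ℝ) < Real.sqrt ((l:ℝ) * ((l:ℝ)+1)) := Real.sqrt_pos.mpr (by nlinarith)
  have ht2 : Real.sqrt (1 - x^2) ^ 2 = 1 - x^2 := Real.sq_sqrt h1x.le
  have hPd := FlmAux.Plm_hasDerivAt l m (by omega) (Set.mem_Ioo.mpr ⟨hx1, hx2⟩)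
  have hder : deriv (Ulm l m) x = clm l m * deriv (Plm l m) x := by
    rw [hU, hPd.deriv]
    exact (hPd.const_mul (clm l m)).deriv
  have hkey := FlmAux.Plm_rec l m hl hm₁ hm₂ (Set.mem_Ioo.mpr ⟨hx1, hx2⟩)
  have hclm := FlmAux.clm_rec l m hl hm₁ hm₂
  rw [Flm, hder]
  simp only [hU, hU1]
  field_simp
  linear_combination (clm l m * deriv (Plm l m) x) * ht2 + clm l m * hkey +
    Plm (l+1) m x * hclm
end

section
/- For all integers l ≥ 1, −l ≤ m ≤ l, and all x ∈ (−1, 1), F_{lm}(x) = (−1/√(l(l+1))) [a^+_{lm} U_{l,m+1}(x) + a^−_{lm} U_{l,m−1}(x) + b^+_{lm} U_{l−1,m+1}(x) + b^−_{lm} U_{l−1,m−1}(x)], where a^±_{lm} := ±√((l ∓ m)(l ± m + 1))/2 and b^±_{lm} := −√((2l+1)/(2l−1)) · √((l ∓ m)(l ∓ m − 1))/2; in particular the right-hand side extends F_{lm} without the singular factor (1 − x^2)^{−1/2}. -/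
open MeasureTheory

/-- The factor `a⁺_{lm} = +√((l−m)(l+m+1))/2`. -/
noncomputable def aP (l m : ℤ) : ℝ :=
  Real.sqrt (((l : ℝ) - m) * ((l : ℝ) + m + 1)) / 2

/-- The factor `a⁻_{lm} = −√((l+m)(l−m+1))/2`. -/
noncomputable def aM (l m : ℤ) : ℝ :=
  -(Real.sqrt (((l : ℝ) + m) * ((l : ℝ) - m + 1)) / 2)

/-- The factor `b⁺_{lm} = −√((2l+1)/(2l−1))·√((l−m)(l−m−1))/2`. -/
noncomputable def bP (l m : ℤ) : ℝ :=
  -(Real.sqrt ((2 * (l : ℝ) + 1) / (2 * (l : ℝ) - 1)) *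
    Real.sqrt (((l : ℝ) - m) * ((l : ℝ) - m - 1)) / 2)

/-- The factor `b⁻_{lm} = −√((2l+1)/(2l−1))·√((l+m)(l+m−1))/2`. -/
noncomputable def bM (l m : ℤ) : ℝ :=
  -(Real.sqrt ((2 * (l : ℝ) + 1) / (2 * (l : ℝ) - 1)) *
    Real.sqrt (((l : ℝ) + m) * ((l : ℝ) + m - 1)) / 2)

namespace FlmAux
open Polynomial

noncomputable def dp (k n : ℕ) : ℝ[X] := derivative^[k] (((X:ℝ[X])^2 - 1)^n)

lemma dp_zero (n : ℕ) : dp 0 n = ((X:ℝ[X])^2 - 1)^n := rfl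

lemma dp_succ (k n : ℕ) : derivative (dp k n) = dp (k+1) n :=
  (Function.iterate_succ_apply' _ _ _).symm

lemma dp_eq_zero (n j : ℕ) (h : 2*n < j) : dp j n = 0 := by
  apply Polynomial.iterate_derivative_eq_zero
  have h1 : ((X:ℝ[X])^2 - 1) = (X:ℝ[X])^2 - C 1 := by simp
  calc (((X:ℝ[X])^2 - 1)^n).natDegree ≤ n * (((X:ℝ[X])^2 - 1)).natDegree := natDegree_pow_le
    _ ≤ n * 2 := by rw [h1, natDegree_X_pow_sub_C]
    _ < j := by omega

lemma L1 (n : ℕ) : ((X:ℝ[X])^2 - 1) * dp 1 n = (2*(n:ℝ[X])) * (X * dp 0 n) := by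
  cases n with
  | zero => simp [dp]
  | succ n =>
      have h : dp 1 (n+1) = derivative (((X:ℝ[X])^2-1)^(n+1)) := rfl
      rw [h, Polynomial.derivative_pow]
      simp only [dp_zero, Nat.add_sub_cancel, derivative_sub, derivative_one, derivative_X_pow,
        Nat.cast_ofNat, map_natCast, Nat.cast_add, Nat.cast_one, sub_zero, pow_one,
        map_add, map_one, map_ofNat]
      push_cast
      ring

lemma L2 (n : ℕ) : ∀ k, ((X:ℝ[X])^2 - 1) * dp (k+2) n + (2*(k:ℝ[X])+2) * (X * dp (k+1) n)
    + ((k:ℝ[X])*((k:ℝ[X])+1)) * dp k n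
    = 2*(n:ℝ[X]) * (X * dp (k+1) n) + 2*(n:ℝ[X])*((k:ℝ[X])+1) * dp k n := by
  intro k
  induction k with
  | zero =>
      have h := congrArg derivative (L1 n)
      simp only [derivative_mul, derivative_sub, derivative_one, derivative_X_pow,
        derivative_natCast, derivative_X, derivative_ofNat, dp_succ, Nat.cast_ofNat,
        map_natCast, map_ofNat, sub_zero, pow_one, zero_mul, mul_one, add_zero, zero_add] at h
      push_cast
      linear_combination h
  | succ k ih =>
      have h := congrArg derivative ih
      simp only [derivative_mul, derivative_add, derivative_sub, derivative_one, derivative_X_pow,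
        derivative_natCast, derivative_X, derivative_ofNat, dp_succ, Nat.cast_ofNat,
        map_natCast, map_ofNat, sub_zero, pow_one, zero_mul, mul_one, add_zero, zero_add,
        zero_mul] at h
      push_cast
      linear_combination h

lemma L3a (n : ℕ) : dp 1 (n+1) = (2*(n:ℝ[X])+2) * (X * dp 0 n) := by
  have h : dp 1 (n+1) = derivative (((X:ℝ[X])^2-1)^(n+1)) := rfl
  rw [h, Polynomial.derivative_pow]
  simp only [dp_zero, Nat.add_sub_cancel, derivative_sub, derivative_one, derivative_X_pow,
    Nat.cast_ofNat, map_natCast, map_ofNat, map_add, map_one, Nat.cast_add, Nat.cast_one,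
    sub_zero, pow_one]
  ring

lemma L3b (n : ℕ) : ∀ k, dp (k+2) (n+1)
    = (2*(n:ℝ[X])+2) * (X * dp (k+1) n) + (2*(n:ℝ[X])+2)*((k:ℝ[X])+1) * dp k n := by
  intro k
  induction k with
  | zero =>
      have h := congrArg derivative (L3a n)
      simp only [derivative_mul, derivative_add, derivative_natCast, derivative_X,
        derivative_ofNat, dp_succ, map_natCast, map_ofNat, zero_mul, mul_one, add_zero,
        zero_add, mul_zero] at h
      push_cast
      linear_combination h
  | succ k ih =>
      have h := congrArg derivative ih
      simp only [derivative_mul, derivative_add, derivative_natCast, derivative_X,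
        derivative_ofNat, derivative_one, dp_succ, map_natCast, map_ofNat, zero_mul, mul_one,
        add_zero, zero_add, mul_zero] at h
      push_cast
      linear_combination h

lemma L4a (n : ℕ) : dp 0 (n+1) = ((X:ℝ[X])^2 - 1) * dp 0 n := by
  simp only [dp_zero, pow_succ]; ring

lemma L4b (n : ℕ) : dp 1 (n+1) = ((X:ℝ[X])^2 - 1) * dp 1 n + 2 * (X * dp 0 n) := by
  have h := congrArg derivative (L4a n)
  simp only [derivative_mul, derivative_sub, derivative_one, derivative_X_pow,
    Nat.cast_ofNat, map_ofNat, sub_zero, pow_one, dp_succ] at h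
  linear_combination h

lemma L4c (n : ℕ) : ∀ k, dp (k+2) (n+1) = ((X:ℝ[X])^2 - 1) * dp (k+2) n
    + (2*(k:ℝ[X])+4) * (X * dp (k+1) n) + ((k:ℝ[X])+1)*((k:ℝ[X])+2) * dp k n := by
  intro k
  induction k with
  | zero =>
      have h := congrArg derivative (L4b n)
      simp only [derivative_mul, derivative_add, derivative_sub, derivative_one,
        derivative_X_pow, derivative_ofNat, derivative_X, Nat.cast_ofNat, map_ofNat, sub_zero,
        pow_one, dp_succ, zero_mul, mul_one, zero_add, add_zero] at h
      push_cast
      linear_combination h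
  | succ k ih =>
      have h := congrArg derivative ih
      simp only [derivative_mul, derivative_add, derivative_sub, derivative_one,
        derivative_X_pow, derivative_ofNat, derivative_X, derivative_natCast, Nat.cast_ofNat,
        map_natCast, map_ofNat, sub_zero, pow_one, dp_succ, zero_mul, mul_one, zero_add,
        add_zero, mul_zero] at h
      push_cast
      linear_combination h

lemma iteratedDeriv_eval (p : ℝ[X]) : ∀ k, iteratedDeriv k (fun y => p.eval y)
    = fun y => (derivative^[k] p).eval y := by
  intro k
  induction k with
  | zero => simp
  | succ k ih =>
      rw [iteratedDeriv_succ, ih]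
      funext y
      rw [Polynomial.deriv, Function.iterate_succ_apply']

lemma Plm_eq_s3 (n : ℕ) (m : ℤ) (k : ℕ) (hk : ((n:ℤ) + m).toNat = k) (x : ℝ) :
    Plm (n:ℤ) m x = ((-1:ℝ)^m / ((2:ℝ)^n * (n.factorial:ℝ))) *
      (1-x^2) ^ ((m:ℝ)/2) * (dp k n).eval x := by
  unfold Plm
  have h2 : (fun y : ℝ => (y^2-1)^((n:ℤ))) = fun y => (dp 0 n).eval y := by
    funext y; rw [dp_zero, zpow_natCast]; simp
  rw [hk, h2, iteratedDeriv_eval]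
  have h3 : (⇑derivative)^[k] (dp 0 n) = dp k n := rfl
  rw [h3]
  norm_num [zpow_natCast]

lemma C1 (n k : ℕ) (hk : k < 2*n) :
    aP (n:ℤ) ((k:ℤ)-n) * clm (n:ℤ) ((k:ℤ)-n+1) = clm (n:ℤ) ((k:ℤ)-n) / 2 := by
  have e1 : ((n:ℤ) - ((k:ℤ)-n+1)).toNat = 2*n-k-1 := by omega
  have e2 : ((n:ℤ) + ((k:ℤ)-n+1)).toNat = k+1 := by omega
  have e3 : ((n:ℤ) - ((k:ℤ)-n)).toNat = 2*n-k := by omega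
  have e4 : ((n:ℤ) + ((k:ℤ)-n)).toNat = k := by omega
  rw [aP, clm, clm, e1, e2, e3, e4]
  obtain ⟨j, hj⟩ : ∃ j, 2*n - k = j+1 := ⟨2*n-k-1, by omega⟩
  rw [hj, Nat.add_sub_cancel]
  have hjr : (j:ℝ) + 1 = 2*(n:ℝ) - k := by
    have : 2*n = k + (j+1) := by omega
    have := congrArg (Nat.cast : ℕ → ℝ) this
    push_cast at this
    linarith
  rw [show (((n:ℤ):ℝ) - (((k:ℤ)-(n:ℤ) : ℤ):ℝ)) * (((n:ℤ):ℝ) + (((k:ℤ)-(n:ℤ) : ℤ):ℝ) + 1)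
      = ((j:ℝ)+1)*((k:ℝ)+1) from by push_cast; linear_combination (-(k:ℝ)-1) * hjr]
  rw [div_mul_eq_mul_div, ← Real.sqrt_mul (by positivity)]
  rw [show ((j:ℝ)+1)*((k:ℝ)+1) * ((2*((n:ℤ):ℝ)+1)/2 * (j.factorial:ℝ)/((k+1).factorial:ℝ))
      = (2*((n:ℤ):ℝ)+1)/2 * ((j+1).factorial:ℝ)/(k.factorial:ℝ) from by
    have fk : ((k.factorial:ℕ):ℝ) ≠ 0 := by positivity
    push_cast [Nat.factorial_succ]
    field_simp]

lemma C2 (n k : ℕ) (hk0 : 0 < k) (hk2n : k ≤ 2*n) :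
    aM (n:ℤ) ((k:ℤ)-n) * clm (n:ℤ) ((k:ℤ)-n-1)
      = -((k:ℝ)*(2*(n:ℝ)-(k:ℝ)+1)/2) * clm (n:ℤ) ((k:ℤ)-n) := by
  obtain ⟨k', rfl⟩ : ∃ k', k = k'+1 := ⟨k-1, by omega⟩
  obtain ⟨i, hi⟩ : ∃ i, 2*n - k' = i+1 := ⟨2*n-k'-1, by omega⟩
  have hik : 2*n = k' + i + 1 := by omega
  have e1 : ((n:ℤ) - (((k'+1:ℕ):ℤ)-n-1)).toNat = i+1 := by omega
  have e2 : ((n:ℤ) + (((k'+1:ℕ):ℤ)-n-1)).toNat = k' := by omega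
  have e3 : ((n:ℤ) - (((k'+1:ℕ):ℤ)-n)).toNat = i := by omega
  have e4 : ((n:ℤ) + (((k'+1:ℕ):ℤ)-n)).toNat = k'+1 := by omega
  rw [aM, clm, clm, e1, e2, e3, e4]
  have hir : (i:ℝ) + 1 = 2*(n:ℝ) - k' := by
    have := congrArg (Nat.cast : ℕ → ℝ) hik
    push_cast at this; linarith
  rw [show 2*(n:ℝ)-((k'+1:ℕ):ℝ)+1 = (i:ℝ)+1 from by push_cast; linarith]
  have h : Real.sqrt ((((n:ℤ):ℝ) + ((((k'+1:ℕ):ℤ)-(n:ℤ) : ℤ):ℝ)) * (((n:ℤ):ℝ) - ((((k'+1:ℕ):ℤ)-(n:ℤ) : ℤ):ℝ) + 1))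
      * Real.sqrt ((2*((n:ℤ):ℝ)+1)/2 * ((i+1).factorial:ℝ)/(k'.factorial:ℝ))
      = ((k':ℝ)+1)*((i:ℝ)+1) * Real.sqrt ((2*((n:ℤ):ℝ)+1)/2 * (i.factorial:ℝ)/((k'+1).factorial:ℝ)) := by
    rw [show (((n:ℤ):ℝ) + ((((k'+1:ℕ):ℤ)-(n:ℤ) : ℤ):ℝ)) * (((n:ℤ):ℝ) - ((((k'+1:ℕ):ℤ)-(n:ℤ) : ℤ):ℝ) + 1)
        = (((k':ℝ)+1)*((i:ℝ)+1)) from by push_cast; linear_combination (-(k':ℝ)-1) * hir]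
    rw [show ((k':ℝ)+1)*((i:ℝ)+1) = Real.sqrt ((((k':ℝ)+1)*((i:ℝ)+1))*(((k':ℝ)+1)*((i:ℝ)+1))) from
      (Real.sqrt_mul_self (by positivity)).symm]
    rw [← Real.sqrt_mul (by positivity), ← Real.sqrt_mul (by positivity)]
    congr 1
    have fk : ((k'.factorial:ℕ):ℝ) ≠ 0 := by positivity
    have fi : ((i.factorial:ℕ):ℝ) ≠ 0 := by positivity
    push_cast [Nat.factorial_succ]
    field_simp
    rw [Real.sqrt_mul' _ (by positivity), Real.sqrt_sq (by positivity), Real.sqrt_sq (by positivity)]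
  push_cast at h ⊢
  linear_combination (-1/2 : ℝ) * h

lemma C3 (n k : ℕ) (hn1 : 1 ≤ n) (hk2n : k + 2 ≤ 2*n) :
    bP (n:ℤ) ((k:ℤ)-n) * clm ((n:ℤ)-1) ((k:ℤ)-n+1) = -(clm (n:ℤ) ((k:ℤ)-n) / 2) := by
  obtain ⟨j, hj⟩ : ∃ j, 2*n - k = j+2 := ⟨2*n-k-2, by omega⟩
  have hjk : 2*n = k + j + 2 := by omega
  have e1 : (((n:ℤ)-1) - (((k:ℕ):ℤ)-n+1)).toNat = j := by omega
  have e2 : (((n:ℤ)-1) + (((k:ℕ):ℤ)-n+1)).toNat = k := by omega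
  have e3 : ((n:ℤ) - (((k:ℕ):ℤ)-n)).toNat = j+2 := by omega
  have e4 : ((n:ℤ) + (((k:ℕ):ℤ)-n)).toNat = k := by omega
  rw [bP, clm, clm, e1, e2, e3, e4]
  have hn1' : (1:ℝ) ≤ (n:ℝ) := by exact_mod_cast hn1
  have hjr : (j:ℝ) + 2 = 2*(n:ℝ) - k := by
    have := congrArg (Nat.cast : ℕ → ℝ) hjk
    push_cast at this; linarith
  have hq : (0:ℝ) ≤ (2*((n:ℤ):ℝ)+1)/(2*((n:ℤ):ℝ)-1) := by
    push_cast; apply div_nonneg <;> linarith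
  have h : Real.sqrt ((2*((n:ℤ):ℝ)+1)/(2*((n:ℤ):ℝ)-1))
      * Real.sqrt ((((n:ℤ):ℝ) - (((k:ℕ):ℤ)-(n:ℤ) : ℤ)) * ((((n:ℤ):ℝ) - (((k:ℕ):ℤ)-(n:ℤ) : ℤ)) - 1))
      * Real.sqrt ((2*(((n:ℤ)-1 : ℤ):ℝ)+1)/2 * (j.factorial:ℝ)/(k.factorial:ℝ))
      = Real.sqrt ((2*((n:ℤ):ℝ)+1)/2 * ((j+2).factorial:ℝ)/(k.factorial:ℝ)) := by
    rw [show (((n:ℤ):ℝ) - (((k:ℕ):ℤ)-(n:ℤ) : ℤ)) * ((((n:ℤ):ℝ) - (((k:ℕ):ℤ)-(n:ℤ) : ℤ)) - 1)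
        = ((j:ℝ)+2)*((j:ℝ)+1) from by push_cast; linear_combination (-(2*(n:ℝ)-(k:ℝ)+(j:ℝ)+1)) * hjr]
    rw [← Real.sqrt_mul hq, ← Real.sqrt_mul (by positivity)]
    congr 1
    have fk : ((k.factorial:ℕ):ℝ) ≠ 0 := by positivity
    have fj : ((j.factorial:ℕ):ℝ) ≠ 0 := by positivity
    have hden : 2*(n:ℝ)-1 ≠ 0 := by intro hc; nlinarith
    push_cast [Nat.factorial_succ]
    field_simp
    ring
  push_cast at h ⊢
  linear_combination (-1/2 : ℝ) * h

lemma C4 (n k : ℕ) (hn1 : 1 ≤ n) (hk2 : 2 ≤ k) (hk2n : k ≤ 2*n) :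
    bM (n:ℤ) ((k:ℤ)-n) * clm ((n:ℤ)-1) ((k:ℤ)-n-1)
      = -((k:ℝ)*((k:ℝ)-1)/2) * clm (n:ℤ) ((k:ℤ)-n) := by
  obtain ⟨k', rfl⟩ : ∃ k', k = k'+2 := ⟨k-2, by omega⟩
  have e1 : (((n:ℤ)-1) - (((k'+2:ℕ):ℤ)-n-1)).toNat = 2*n-(k'+2) := by omega
  have e2 : (((n:ℤ)-1) + (((k'+2:ℕ):ℤ)-n-1)).toNat = k' := by omega
  have e3 : ((n:ℤ) - (((k'+2:ℕ):ℤ)-n)).toNat = 2*n-(k'+2) := by omega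
  have e4 : ((n:ℤ) + (((k'+2:ℕ):ℤ)-n)).toNat = k'+2 := by omega
  rw [bM, clm, clm, e1, e2, e3, e4]
  have hn1' : (1:ℝ) ≤ (n:ℝ) := by exact_mod_cast hn1
  have hq : (0:ℝ) ≤ (2*((n:ℤ):ℝ)+1)/(2*((n:ℤ):ℝ)-1) := by
    push_cast; apply div_nonneg <;> linarith
  rw [show ((k'+2:ℕ):ℝ)*(((k'+2:ℕ):ℝ)-1) = ((k':ℝ)+2)*((k':ℝ)+1) from by push_cast; ring]
  have h : Real.sqrt ((2*((n:ℤ):ℝ)+1)/(2*((n:ℤ):ℝ)-1))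
      * Real.sqrt (((((n:ℤ):ℝ)) + ((((k'+2:ℕ):ℤ)-(n:ℤ) : ℤ):ℝ)) * (((((n:ℤ):ℝ)) + ((((k'+2:ℕ):ℤ)-(n:ℤ) : ℤ):ℝ)) - 1))
      * Real.sqrt ((2*(((n:ℤ)-1 : ℤ):ℝ)+1)/2 * ((2*n-(k'+2)).factorial:ℝ)/(k'.factorial:ℝ))
      = ((k':ℝ)+2)*((k':ℝ)+1) * Real.sqrt ((2*((n:ℤ):ℝ)+1)/2 * ((2*n-(k'+2)).factorial:ℝ)/((k'+2).factorial:ℝ)) := by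
    rw [show (((((n:ℤ):ℝ)) + ((((k'+2:ℕ):ℤ)-(n:ℤ) : ℤ):ℝ)) * (((((n:ℤ):ℝ)) + ((((k'+2:ℕ):ℤ)-(n:ℤ) : ℤ):ℝ)) - 1))
        = ((k':ℝ)+2)*((k':ℝ)+1) from by push_cast; ring]
    rw [show ((k':ℝ)+2)*((k':ℝ)+1) = Real.sqrt ((((k':ℝ)+2)*((k':ℝ)+1))*(((k':ℝ)+2)*((k':ℝ)+1))) from
      (Real.sqrt_mul_self (by positivity)).symm]
    rw [← Real.sqrt_mul hq, ← Real.sqrt_mul (by positivity), ← Real.sqrt_mul (by positivity)]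
    congr 1
    have fk : ((k'.factorial:ℕ):ℝ) ≠ 0 := by positivity
    have fi : (((2*n-(k'+2)).factorial:ℕ):ℝ) ≠ 0 := by positivity
    have hden : 2*(n:ℝ)-1 ≠ 0 := by intro hc; nlinarith
    push_cast [Nat.factorial_succ]
    field_simp
    rw [Real.sqrt_mul' _ (by positivity), Real.sqrt_sq (by positivity), Real.sqrt_sq (by positivity)]
    ring
  push_cast at h ⊢
  linear_combination (-1/2 : ℝ) * h

open Polynomial in
lemma T1 (n k : ℕ) (x : ℝ) (hk2n : k ≤ 2*n) (ht : (0:ℝ) < 1 - x^2) :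
    aP (n:ℤ) ((k:ℤ)-n) * Ulm (n:ℤ) ((k:ℤ)-n+1) x
      = -(1/2) * (clm (n:ℤ) ((k:ℤ)-n) * ((-1:ℝ)^((k:ℤ)-(n:ℤ)) / ((2:ℝ)^n * (n.factorial:ℝ)))
          * ((1-x^2) ^ (((k:ℝ)-(n:ℝ)-1)/2) * ((1-x^2) * (dp (k+1) n).eval x))) := by
  rcases eq_or_lt_of_le hk2n with hk | hk
  · have h1 : aP (n:ℤ) ((k:ℤ)-n) = 0 := by
      rw [aP, show (((n:ℤ)):ℝ) - (((k:ℤ)-(n:ℤ) : ℤ):ℝ) = 0 from by push_cast [hk]; ring]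
      rw [zero_mul, Real.sqrt_zero, zero_div]
    have h2 : (dp (k+1) n).eval x = 0 := by rw [dp_eq_zero n (k+1) (by omega), eval_zero]
    rw [h1, h2]; ring
  · have habs : |(k:ℤ)-(n:ℤ)+1| ≤ (n:ℤ) := abs_le.mpr ⟨by omega, by omega⟩
    have hU : Ulm (n:ℤ) ((k:ℤ)-n+1) x = clm (n:ℤ) ((k:ℤ)-n+1) * Plm (n:ℤ) ((k:ℤ)-n+1) x := by
      rw [Ulm, if_pos habs]
    rw [hU, Plm_eq_s3 n ((k:ℤ)-n+1) (k+1) (by omega) x]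
    have hz : (-1:ℝ)^((k:ℤ)-(n:ℤ)+1) = -(-1:ℝ)^((k:ℤ)-(n:ℤ)) := by
      rw [zpow_add_one₀ (by norm_num : (-1:ℝ) ≠ 0)]; ring
    have hexp : (1-x^2) ^ ((((k:ℤ)-(n:ℤ)+1 : ℤ):ℝ)/2)
        = (1-x^2) ^ (((k:ℝ)-(n:ℝ)-1)/2) * (1-x^2) := by
      rw [show (((k:ℤ)-(n:ℤ)+1 : ℤ):ℝ)/2 = ((k:ℝ)-(n:ℝ)-1)/2 + 1 from by push_cast; ring,
        Real.rpow_add ht, Real.rpow_one]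
    rw [hz, hexp]
    have hC := C1 n k hk
    linear_combination (-(-1:ℝ)^((k:ℤ)-(n:ℤ)) * ((1-x^2) ^ (((k:ℝ)-(n:ℝ)-1)/2) * (1-x^2))
      * (dp (k+1) n).eval x / ((2:ℝ)^n * (n.factorial:ℝ))) * hC
open Polynomial in
lemma T2 (n k : ℕ) (x : ℝ) (hk2n : k ≤ 2*n) (ht : (0:ℝ) < 1 - x^2) :
    aM (n:ℤ) ((k:ℤ)-n) * Ulm (n:ℤ) ((k:ℤ)-n-1) x
      = (1/2) * ((k:ℝ)*(2*(n:ℝ)-(k:ℝ)+1)) * (clm (n:ℤ) ((k:ℤ)-n)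
          * ((-1:ℝ)^((k:ℤ)-(n:ℤ)) / ((2:ℝ)^n * (n.factorial:ℝ)))
          * ((1-x^2) ^ (((k:ℝ)-(n:ℝ)-1)/2) * (dp (k-1) n).eval x)) := by
  rcases Nat.eq_zero_or_pos k with hk | hk
  · subst hk
    have h1 : aM (n:ℤ) ((0:ℤ)-n) = 0 := by
      rw [aM, show (((n:ℤ)):ℝ) + (((0:ℤ)-(n:ℤ) : ℤ):ℝ) = 0 from by push_cast; ring]
      rw [zero_mul, Real.sqrt_zero, zero_div, neg_zero]
    rw [show ((0:ℕ):ℤ) - (n:ℤ) = (0:ℤ)-(n:ℤ) from by push_cast; ring] at *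
    rw [h1]
    norm_num
  · have habs : |(k:ℤ)-(n:ℤ)-1| ≤ (n:ℤ) := abs_le.mpr ⟨by omega, by omega⟩
    have hU : Ulm (n:ℤ) ((k:ℤ)-n-1) x = clm (n:ℤ) ((k:ℤ)-n-1) * Plm (n:ℤ) ((k:ℤ)-n-1) x := by
      rw [Ulm, if_pos habs]
    rw [hU, Plm_eq_s3 n ((k:ℤ)-n-1) (k-1) (by omega) x]
    have hz : (-1:ℝ)^((k:ℤ)-(n:ℤ)-1) = -(-1:ℝ)^((k:ℤ)-(n:ℤ)) := by
      rw [zpow_sub_one₀ (by norm_num : (-1:ℝ) ≠ 0)]; norm_num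
    have hexp : (1-x^2) ^ ((((k:ℤ)-(n:ℤ)-1 : ℤ):ℝ)/2) = (1-x^2) ^ (((k:ℝ)-(n:ℝ)-1)/2) := by
      congr 1; push_cast; ring
    rw [hz, hexp]
    have hC := C2 n k hk hk2n
    linear_combination (-(-1:ℝ)^((k:ℤ)-(n:ℤ)) * ((1-x^2) ^ (((k:ℝ)-(n:ℝ)-1)/2))
      * (dp (k-1) n).eval x / ((2:ℝ)^n * (n.factorial:ℝ))) * hC
open Polynomial in
lemma T3 (n k : ℕ) (x : ℝ) (hn1 : 1 ≤ n) (hk2n : k ≤ 2*n) (ht : (0:ℝ) < 1 - x^2) :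
    bP (n:ℤ) ((k:ℤ)-n) * Ulm ((n:ℤ)-1) ((k:ℤ)-n+1) x
      = (n:ℝ) * (clm (n:ℤ) ((k:ℤ)-n) * ((-1:ℝ)^((k:ℤ)-(n:ℤ)) / ((2:ℝ)^n * (n.factorial:ℝ)))
          * ((1-x^2) ^ (((k:ℝ)-(n:ℝ)-1)/2) * ((1-x^2) * (dp k (n-1)).eval x))) := by
  obtain ⟨n', rfl⟩ : ∃ n', n = n'+1 := ⟨n-1, by omega⟩
  by_cases hk : k + 2 ≤ 2*(n'+1)
  · -- generic case
    have habs : |(k:ℤ)-((n'+1:ℕ):ℤ)+1| ≤ ((n'+1:ℕ):ℤ) - 1 := abs_le.mpr ⟨by omega, by omega⟩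
    have hU : Ulm (((n'+1:ℕ):ℤ)-1) ((k:ℤ)-((n'+1:ℕ):ℤ)+1) x
        = clm (((n'+1:ℕ):ℤ)-1) ((k:ℤ)-((n'+1:ℕ):ℤ)+1)
          * Plm (((n'+1:ℕ):ℤ)-1) ((k:ℤ)-((n'+1:ℕ):ℤ)+1) x := by
      rw [Ulm, if_pos habs]
    have hl' : ((n'+1:ℕ):ℤ) - 1 = ((n':ℕ):ℤ) := by push_cast; ring
    rw [hU, hl', Plm_eq_s3 n' ((k:ℤ)-((n'+1:ℕ):ℤ)+1) k (by omega) x]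
    have hz : (-1:ℝ)^((k:ℤ)-((n'+1:ℕ):ℤ)+1) = -(-1:ℝ)^((k:ℤ)-((n'+1:ℕ):ℤ)) := by
      rw [zpow_add_one₀ (by norm_num : (-1:ℝ) ≠ 0)]; ring
    have hexp : (1-x^2) ^ ((((k:ℤ)-((n'+1:ℕ):ℤ)+1 : ℤ):ℝ)/2)
        = (1-x^2) ^ (((k:ℝ)-((n'+1:ℕ):ℝ)-1)/2) * (1-x^2) := by
      rw [show (((k:ℤ)-((n'+1:ℕ):ℤ)+1 : ℤ):ℝ)/2 = ((k:ℝ)-((n'+1:ℕ):ℝ)-1)/2 + 1 from by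
        push_cast; ring, Real.rpow_add ht, Real.rpow_one]
    rw [hz, hexp]
    have hC := C3 (n'+1) k (by omega) hk
    rw [hl'] at hC
    have hfac : (((n'+1).factorial:ℕ):ℝ) = ((n'+1:ℕ):ℝ) * (n'.factorial:ℝ) := by
      rw [Nat.factorial_succ]; push_cast; ring
    have hnn : (n'+1) - 1 = n' := by omega
    rw [hnn, hfac]
    have h20 : (2:ℝ)^(n'+1) = 2 * (2:ℝ)^n' := by rw [pow_succ]; ring
    rw [h20]
    have hne1 : ((2:ℝ)^n') ≠ 0 := by positivity
    have hne2 : ((n'.factorial:ℕ):ℝ) ≠ 0 := by positivity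
    field_simp
    push_cast at hC ⊢
    linear_combination (-2 * (dp k n').eval x) * hC
  · -- boundary: k ≥ 2n-1
    have h1 : bP ((n'+1:ℕ):ℤ) ((k:ℤ)-((n'+1:ℕ):ℤ)) = 0 := by
      rw [bP]
      rcases (show (k:ℤ) = 2*(n':ℤ)+1 ∨ (k:ℤ) = 2*(n':ℤ)+2 from by omega) with hk' | hk'
      · have hkr : (k:ℝ) = 2*(n':ℝ)+1 := by exact_mod_cast hk'
        rw [show ((((n'+1:ℕ):ℤ)):ℝ) - (((k:ℤ)-((n'+1:ℕ):ℤ) : ℤ):ℝ) - 1 = 0 from by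
          push_cast; rw [hkr]; ring]
        rw [mul_zero, Real.sqrt_zero, mul_zero, zero_div, neg_zero]
      · have hkr : (k:ℝ) = 2*(n':ℝ)+2 := by exact_mod_cast hk'
        rw [show ((((n'+1:ℕ):ℤ)):ℝ) - (((k:ℤ)-((n'+1:ℕ):ℤ) : ℤ):ℝ) = 0 from by
          push_cast; rw [hkr]; ring]
        rw [zero_mul, Real.sqrt_zero, mul_zero, zero_div, neg_zero]
    have h2 : (dp k ((n'+1)-1)).eval x = 0 := by
      rw [dp_eq_zero (n'+1-1) k (by omega), eval_zero]
    rw [h1, h2]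
    ring
open Polynomial in
lemma T4 (n k : ℕ) (x : ℝ) (hn1 : 1 ≤ n) (hk2n : k ≤ 2*n) :
    bM (n:ℤ) ((k:ℤ)-n) * Ulm ((n:ℤ)-1) ((k:ℤ)-n-1) x
      = (n:ℝ) * ((k:ℝ)*((k:ℝ)-1)) * (clm (n:ℤ) ((k:ℤ)-n)
          * ((-1:ℝ)^((k:ℤ)-(n:ℤ)) / ((2:ℝ)^n * (n.factorial:ℝ)))
          * ((1-x^2) ^ (((k:ℝ)-(n:ℝ)-1)/2) * (dp (k-2) (n-1)).eval x)) := by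
  obtain ⟨n', rfl⟩ : ∃ n', n = n'+1 := ⟨n-1, by omega⟩
  by_cases hk : 2 ≤ k
  · -- generic case
    have habs : |(k:ℤ)-((n'+1:ℕ):ℤ)-1| ≤ ((n'+1:ℕ):ℤ) - 1 := abs_le.mpr ⟨by omega, by omega⟩
    have hU : Ulm (((n'+1:ℕ):ℤ)-1) ((k:ℤ)-((n'+1:ℕ):ℤ)-1) x
        = clm (((n'+1:ℕ):ℤ)-1) ((k:ℤ)-((n'+1:ℕ):ℤ)-1)
          * Plm (((n'+1:ℕ):ℤ)-1) ((k:ℤ)-((n'+1:ℕ):ℤ)-1) x := by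
      rw [Ulm, if_pos habs]
    have hl' : ((n'+1:ℕ):ℤ) - 1 = ((n':ℕ):ℤ) := by push_cast; ring
    rw [hU, hl', Plm_eq_s3 n' ((k:ℤ)-((n'+1:ℕ):ℤ)-1) (k-2) (by omega) x]
    have hz : (-1:ℝ)^((k:ℤ)-((n'+1:ℕ):ℤ)-1) = -(-1:ℝ)^((k:ℤ)-((n'+1:ℕ):ℤ)) := by
      rw [zpow_sub_one₀ (by norm_num : (-1:ℝ) ≠ 0)]; norm_num
    have hexp : (1-x^2) ^ ((((k:ℤ)-((n'+1:ℕ):ℤ)-1 : ℤ):ℝ)/2)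
        = (1-x^2) ^ (((k:ℝ)-((n'+1:ℕ):ℝ)-1)/2) := by
      congr 1; push_cast; ring
    rw [hz, hexp]
    have hC := C4 (n'+1) k (by omega) hk hk2n
    rw [hl'] at hC
    have hfac : (((n'+1).factorial:ℕ):ℝ) = ((n'+1:ℕ):ℝ) * (n'.factorial:ℝ) := by
      rw [Nat.factorial_succ]; push_cast; ring
    have hnn : (n'+1) - 1 = n' := by omega
    rw [hnn, hfac]
    have h20 : (2:ℝ)^(n'+1) = 2 * (2:ℝ)^n' := by rw [pow_succ]; ring
    rw [h20]
    have hne1 : ((2:ℝ)^n') ≠ 0 := by positivity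
    have hne2 : ((n'.factorial:ℕ):ℝ) ≠ 0 := by positivity
    field_simp
    push_cast at hC ⊢
    linear_combination (-2 * (1-x^2) ^ (((k:ℝ)-((n':ℝ)+1)-1)/2) * (dp (k-2) n').eval x) * hC
  · -- boundary: k ≤ 1
    have h1 : bM ((n'+1:ℕ):ℤ) ((k:ℤ)-((n'+1:ℕ):ℤ)) = 0 := by
      rw [bM]
      rcases (show (k:ℤ) = 0 ∨ (k:ℤ) = 1 from by omega) with hk' | hk'
      · have hkr : (k:ℝ) = 0 := by exact_mod_cast hk'
        rw [show ((((n'+1:ℕ):ℤ)):ℝ) + (((k:ℤ)-((n'+1:ℕ):ℤ) : ℤ):ℝ) = 0 from by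
          push_cast; rw [hkr]; ring]
        rw [zero_mul, Real.sqrt_zero, mul_zero, zero_div, neg_zero]
      · have hkr : (k:ℝ) = 1 := by exact_mod_cast hk'
        rw [show ((((n'+1:ℕ):ℤ)):ℝ) + (((k:ℤ)-((n'+1:ℕ):ℤ) : ℤ):ℝ) - 1 = 0 from by
          push_cast; rw [hkr]; ring]
        rw [mul_zero, Real.sqrt_zero, mul_zero, zero_div, neg_zero]
    have h2 : (k:ℝ)*((k:ℝ)-1) = 0 := by
      rcases (show k = 0 ∨ k = 1 from by omega) with hk' | hk' <;> subst hk' <;> norm_num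
    rw [h1, h2]
    ring
open Polynomial in
lemma LHSb (n k : ℕ) (x : ℝ) (hk2n : k ≤ 2*n) (ht : (0:ℝ) < 1 - x^2) :
    Real.sqrt (1-x^2) * deriv (Ulm (n:ℤ) ((k:ℤ)-n)) x
      - ((((k:ℤ)-(n:ℤ) : ℤ):ℝ) / Real.sqrt (1-x^2)) * Ulm (n:ℤ) ((k:ℤ)-n) x
      = clm (n:ℤ) ((k:ℤ)-n) * ((-1:ℝ)^((k:ℤ)-(n:ℤ)) / ((2:ℝ)^n * (n.factorial:ℝ)))
        * ((1-x^2) ^ (((k:ℝ)-(n:ℝ)-1)/2)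
          * ((1-x^2) * (dp (k+1) n).eval x - (((k:ℝ)-(n:ℝ))*(1+x)) * (dp k n).eval x)) := by
  have habs : |(k:ℤ)-(n:ℤ)| ≤ (n:ℤ) := abs_le.mpr ⟨by omega, by omega⟩
  have hUf : Ulm (n:ℤ) ((k:ℤ)-n)
      = fun y => (clm (n:ℤ) ((k:ℤ)-n) * ((-1:ℝ)^((k:ℤ)-(n:ℤ)) / ((2:ℝ)^n * (n.factorial:ℝ))))
        * ((1-y^2) ^ ((((k:ℤ)-(n:ℤ) : ℤ):ℝ)/2) * (dp k n).eval y) := by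
    funext y
    rw [Ulm, if_pos habs, Plm_eq_s3 n ((k:ℤ)-n) k (by omega) y]
    ring
  have h1 : HasDerivAt (fun y : ℝ => 1 - y^2) (-(2*x)) x := by
    simpa using ((hasDerivAt_pow 2 x).const_sub 1)
  have h2 : HasDerivAt (fun y : ℝ => (1-y^2) ^ ((((k:ℤ)-(n:ℤ) : ℤ):ℝ)/2))
      ((((((k:ℤ)-(n:ℤ) : ℤ):ℝ))/2) * (1-x^2) ^ (((((k:ℤ)-(n:ℤ) : ℤ):ℝ))/2 - 1) * (-(2*x))) x :=
    by have := h1.rpow_const (p := ((((k:ℤ)-(n:ℤ) : ℤ):ℝ))/2) (Or.inl ht.ne'); convert this using 1; ring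
  have h3 : HasDerivAt (fun y : ℝ => (dp k n).eval y) ((dp (k+1) n).eval x) x := by
    have := Polynomial.hasDerivAt (dp k n) x
    rwa [dp_succ] at this
  have h4 := (h2.mul h3).const_mul
    (clm (n:ℤ) ((k:ℤ)-n) * ((-1:ℝ)^((k:ℤ)-(n:ℤ)) / ((2:ℝ)^n * (n.factorial:ℝ))))
  have h5 : HasDerivAt (Ulm (n:ℤ) ((k:ℤ)-n)) _ x := hUf ▸ h4
  rw [h5.deriv, hUf]
  simp only []
  have hs0 : (0:ℝ) < Real.sqrt (1-x^2) := Real.sqrt_pos.mpr ht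
  have hss : Real.sqrt (1-x^2) * Real.sqrt (1-x^2) = 1-x^2 := Real.mul_self_sqrt ht.le
  have he1 : (1-x^2) ^ ((((k:ℤ)-(n:ℤ) : ℤ):ℝ)/2)
      = (1-x^2) ^ (((k:ℝ)-(n:ℝ)-1)/2) * Real.sqrt (1-x^2) := by
    rw [Real.sqrt_eq_rpow, ← Real.rpow_add ht]; congr 1; push_cast; ring
  have he2 : (1-x^2) ^ ((((k:ℤ)-(n:ℤ) : ℤ):ℝ)/2 - 1)
      = (1-x^2) ^ (((k:ℝ)-(n:ℝ)-1)/2) / Real.sqrt (1-x^2) := by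
    rw [Real.sqrt_eq_rpow, ← Real.rpow_sub ht]; congr 1; push_cast; ring
  rw [he1, he2]
  rw [show (((k:ℤ)-(n:ℤ) : ℤ):ℝ) = (k:ℝ)-(n:ℝ) from by push_cast; ring]
  have hss2 : Real.sqrt (1-x^2)^2 = 1-x^2 := Real.sq_sqrt ht.le
  field_simp
  linear_combination clm (n:ℤ) ((k:ℤ)-n) * (dp (k+1) n).eval x * hss2
open Polynomial in
lemma star (n k : ℕ) (x : ℝ) (hn1 : 1 ≤ n) :
    (1/2)*(1-x^2)*(dp (k+1) n).eval x - ((k:ℝ)-(n:ℝ))*(1+x)*(dp k n).eval x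
      + (1/2)*((k:ℝ)*(2*(n:ℝ)-(k:ℝ)+1))*(dp (k-1) n).eval x
      + (n:ℝ)*(1-x^2)*(dp k (n-1)).eval x
      + (n:ℝ)*((k:ℝ)*((k:ℝ)-1))*(dp (k-2) (n-1)).eval x = 0 := by
  obtain ⟨n', rfl⟩ : ∃ n', n = n'+1 := ⟨n-1, by omega⟩
  have hnn : (n'+1) - 1 = n' := by omega
  rw [hnn]
  match k with
  | 0 =>
      have ha := congrArg (eval x) (L1 (n'+1))
      have hc := congrArg (eval x) (L4a n')
      simp only [eval_mul, eval_add, eval_sub, eval_pow, eval_one, eval_X, eval_natCast,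
        eval_ofNat, eval_zero, Nat.cast_zero] at ha hc
      push_cast at ha hc ⊢
      linear_combination (-1/2 : ℝ) * ha + ((n':ℝ)+1) * hc
  | 1 =>
      have ha := congrArg (eval x) (L2 (n'+1) 0)
      have hb := congrArg (eval x) (L3a n')
      have hc := congrArg (eval x) (L4b n')
      simp only [eval_mul, eval_add, eval_sub, eval_pow, eval_one, eval_X, eval_natCast,
        eval_ofNat, eval_zero, Nat.cast_zero] at ha hb hc
      push_cast at ha hb hc ⊢
      linear_combination (-1/2 : ℝ) * ha - hb + ((n':ℝ)+1) * hc
  | (k'+2) =>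
      have ha := congrArg (eval x) (L2 (n'+1) (k'+1))
      have hb := congrArg (eval x) (L3b n' k')
      have hc := congrArg (eval x) (L4c n' k')
      simp only [eval_mul, eval_add, eval_sub, eval_pow, eval_one, eval_X, eval_natCast,
        eval_ofNat] at ha hb hc
      have e1 : k'+2-1 = k'+1 := by omega
      have e2 : k'+2-2 = k' := by omega
      have e3 : k'+1+1 = k'+2 := by omega
      have e4 : k'+2+1 = k'+1+2 := by omega
      rw [e1, e2, e4]
      push_cast at ha hb hc ⊢
      linear_combination (-1/2 : ℝ) * ha - ((k':ℝ)+2) * hb + ((n':ℝ)+1) * hc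
end FlmAux

/-- Singularity-free expression of `F_{lm}` in terms of normalized associated
Legendre functions of orders `m ± 1`. -/
theorem Flm_singularity_free (l m : ℤ) (hl : 1 ≤ l) (hm₁ : -l ≤ m) (hm₂ : m ≤ l)
    (x : ℝ) (hx : x ∈ Set.Ioo (-1 : ℝ) 1) :
    Flm l m x =
      (-1 / Real.sqrt ((l : ℝ) * ((l : ℝ) + 1))) *
        (aP l m * Ulm l (m + 1) x + aM l m * Ulm l (m - 1) x +
          bP l m * Ulm (l - 1) (m + 1) x + bM l m * Ulm (l - 1) (m - 1) x) := by
  obtain ⟨hx1, hx2⟩ := hx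
  obtain ⟨n, rfl⟩ : ∃ n : ℕ, l = (n:ℤ) := ⟨l.toNat, by omega⟩
  have hn1 : 1 ≤ n := by exact_mod_cast hl
  obtain ⟨k, rfl, hk2n⟩ : ∃ k : ℕ, m = (k:ℤ) - (n:ℤ) ∧ k ≤ 2*n := ⟨(m+n).toNat, by omega, by omega⟩
  have ht : (0:ℝ) < 1 - x^2 := by nlinarith
  rw [Flm, FlmAux.LHSb n k x hk2n ht, FlmAux.T1 n k x hk2n ht, FlmAux.T2 n k x hk2n ht,
    FlmAux.T3 n k x hn1 hk2n ht, FlmAux.T4 n k x hn1 hk2n]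
  have hstar := FlmAux.star n k x hn1
  linear_combination (1 / Real.sqrt (((n:ℤ):ℝ) * (((n:ℤ):ℝ)+1))) * (clm (n:ℤ) ((k:ℤ)-n)
    * ((-1:ℝ)^((k:ℤ)-(n:ℤ)) / ((2:ℝ)^n * (n.factorial:ℝ)))
    * (1-x^2) ^ (((k:ℝ)-(n:ℝ)-1)/2)) * hstar
end

section
/- Three-term recurrence for F_{lm}: for all integers l ≥ 1, −l ≤ m ≤ l, and all x ∈ (−1, 1), [x − m/(l(l+1))] F_{lm}(x) = ζ_{lm} F_{l−1,m}(x) + ζ_{l+1,m} F_{l+1,m}(x), where ζ_{lm} := (1/l)·√((l+1)(l−1)(l+m)(l−m)/((2l+1)(2l−1))) and F_{l'm} := 0 whenever l' < max(1, |m|). -/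
open MeasureTheory

/-- The factor `ζ_{lm} = (1/l)·√((l+1)(l−1)(l+m)(l−m)/((2l+1)(2l−1)))`. -/
noncomputable def zetalm (l m : ℤ) : ℝ :=
  (1 / (l : ℝ)) *
    Real.sqrt (((l : ℝ) + 1) * ((l : ℝ) - 1) * ((l : ℝ) + m) * ((l : ℝ) - m) /
      ((2 * (l : ℝ) + 1) * (2 * (l : ℝ) - 1)))



open Polynomial


open Polynomial

lemma iter_deriv_comm (p : ℝ[X]) (j : ℕ) :
    derivative^[j] (derivative p) = derivative^[j + 1] p :=
  (Function.iterate_succ_apply derivative j p).symm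

lemma iter_deriv_add (p q : ℝ[X]) (j : ℕ) :
    derivative^[j] (p + q) = derivative^[j] p + derivative^[j] q := by
  induction j generalizing p q with
  | zero => rfl
  | succ i ih =>
    rw [Function.iterate_succ_apply, map_add, ih, iter_deriv_comm, iter_deriv_comm]

lemma iter_deriv_X_mul (p : ℝ[X]) (j : ℕ) :
    derivative^[j] (X * p) = X * derivative^[j] p + (j : ℝ[X]) * derivative^[j - 1] p := by
  induction j generalizing p with
  | zero => simp
  | succ i ih =>
    rw [Function.iterate_succ_apply, derivative_mul, derivative_X, one_mul, iter_deriv_add, ih]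
    cases i with
    | zero => simp; ring
    | succ i' =>
      rw [iter_deriv_comm, iter_deriv_comm]
      have h1 : i' + 1 - 1 = i' := rfl
      have h2 : i' + 1 + 1 - 1 = i' + 1 := rfl
      rw [h1, h2]
      push_cast
      ring

lemma iter_deriv_two_mul (p : ℝ[X]) (j : ℕ) :
    derivative^[j] (2 * p) = 2 * derivative^[j] p := by
  have h : (2 : ℝ[X]) = C 2 := by norm_num [map_ofNat]
  rw [h, iterate_derivative_C_mul]

lemma iter_deriv_X2_mul (p : ℝ[X]) (j : ℕ) :
    derivative^[j] ((X ^ 2 - 1) * p) = (X ^ 2 - 1) * derivative^[j] p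
      + 2 * (j : ℝ[X]) * (X * derivative^[j - 1] p)
      + (j : ℝ[X]) * ((j : ℝ[X]) - 1) * derivative^[j - 2] p := by
  induction j generalizing p with
  | zero => simp
  | succ i ih =>
    have hd : derivative ((X ^ 2 - 1) * p) = (X ^ 2 - 1) * derivative p + 2 * (X * p) := by
      rw [derivative_mul]
      simp [derivative_X_pow, map_ofNat]
      ring
    rw [Function.iterate_succ_apply, hd, iter_deriv_add, ih, iter_deriv_two_mul,
      iter_deriv_X_mul]
    cases i with
    | zero => simp
    | succ i' =>
      cases i' with
      | zero =>
        simp only [iter_deriv_comm, Function.iterate_zero_apply]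
        norm_num
        ring
      | succ i'' =>
        have e1 : i'' + 1 + 1 - 1 = i'' + 1 := rfl
        have e2 : i'' + 1 - 1 = i'' := rfl
        have e3 : i'' + 1 + 1 - 2 = i'' := rfl
        have e4 : i'' + 1 + 1 + 1 - 1 = i'' + 1 + 1 := rfl
        have e5 : i'' + 1 + 1 + 1 - 2 = i'' + 1 := rfl
        rw [e1, e3, e4, e5, iter_deriv_comm, iter_deriv_comm, iter_deriv_comm]
        push_cast
        ring

noncomputable def qP (n j : ℕ) : ℝ[X] := derivative^[j] ((X ^ 2 - 1) ^ n)

lemma natCast_eq_C (a : ℕ) : ((a : ℝ[X])) = C ((a : ℝ)) := by simp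

lemma iter_deriv_cast_mul (a : ℝ[X]) (h : ∃ r : ℝ, a = C r) (p : ℝ[X]) (j : ℕ) :
    derivative^[j] (a * p) = a * derivative^[j] p := by
  obtain ⟨r, rfl⟩ := h
  exact iterate_derivative_C_mul r p j

lemma deriv_pow_X2 (n : ℕ) :
    derivative ((X ^ 2 - 1 : ℝ[X]) ^ (n + 1)) = (2 * ((n : ℝ[X]) + 1)) * (X * (X ^ 2 - 1) ^ n) := by
  rw [derivative_pow]
  have h1 : n + 1 - 1 = n := rfl
  rw [h1]
  have h2 : derivative (X ^ 2 - 1 : ℝ[X]) = 2 * X := by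
    simp [derivative_X_pow, map_ofNat]
    norm_num
  rw [h2]
  have h3 : (C ((n : ℝ) + 1)) = ((n : ℝ[X]) + 1) := by
    rw [map_add, map_one, ← natCast_eq_C]
  push_cast
  rw [h3]
  ring

lemma lemR1 (n j : ℕ) :
    qP (n + 1) (j + 1)
      = (2 * ((n : ℝ[X]) + 1)) * (X * qP n j + (j : ℝ[X]) * qP n (j - 1)) := by
  unfold qP
  rw [Function.iterate_succ_apply, deriv_pow_X2]
  have hc : (2 * ((n : ℝ[X]) + 1)) = C (2 * ((n : ℝ) + 1)) := by
    rw [natCast_eq_C]; push_cast; ring_nf; simp [map_ofNat, mul_comm]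
  rw [hc, iterate_derivative_C_mul, iter_deriv_X_mul]

lemma lemR3_base (n : ℕ) :
    (X ^ 2 - 1) * qP n 1 = (2 * (n : ℝ[X])) * (X * qP n 0) := by
  cases n with
  | zero => simp [qP]
  | succ n' =>
    unfold qP
    simp only [Function.iterate_one, Function.iterate_zero_apply]
    rw [deriv_pow_X2]
    push_cast
    ring

lemma lemR3 (n j : ℕ) :
    (X ^ 2 - 1) * qP n (j + 1)
      = (2 * ((n : ℝ[X]) - (j : ℝ[X]))) * (X * qP n j)
        + ((j : ℝ[X]) * (2 * (n : ℝ[X]) - (j : ℝ[X]) + 1)) * qP n (j - 1) := by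
  cases j with
  | zero => simpa using lemR3_base n
  | succ i =>
    have key := congrArg (derivative^[i + 1]) (lemR3_base n)
    rw [iter_deriv_X2_mul] at key
    have hc : (2 * (n : ℝ[X])) = C (2 * (n : ℝ)) := by
      rw [natCast_eq_C]; ring_nf; simp [map_ofNat, mul_comm]
    rw [hc, iterate_derivative_C_mul, iter_deriv_X_mul] at key
    have hq : ∀ a : ℕ, derivative^[a] (qP n 1) = qP n (a + 1) := by
      intro a
      unfold qP
      rw [Function.iterate_one, iter_deriv_comm]
    have hq0 : ∀ a : ℕ, derivative^[a] (qP n 0) = qP n a := by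
      intro a; unfold qP; rw [Function.iterate_zero_apply]
    rw [← hc] at key
    simp only [hq, hq0] at key
    have e1 : i + 1 - 1 = i := rfl
    rw [e1] at key ⊢
    cases i with
    | zero =>
      push_cast at key ⊢
      linear_combination key
    | succ i' =>
      have e2 : i' + 1 + 1 - 2 = i' := rfl
      rw [e2] at key
      push_cast at key ⊢
      linear_combination key

noncomputable def qR (n j : ℕ) (x : ℝ) : ℝ := (qP n j).eval x

lemma R1E (n j : ℕ) (x : ℝ) :
    qR (n + 1) (j + 1) x
      = (2 * ((n : ℝ) + 1)) * (x * qR n j x + (j : ℝ) * qR n (j - 1) x) := by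
  unfold qR
  rw [lemR1]
  simp

lemma R3E (n j : ℕ) (x : ℝ) :
    (x ^ 2 - 1) * qR n (j + 1) x
      = (2 * ((n : ℝ) - (j : ℝ))) * (x * qR n j x)
        + ((j : ℝ) * (2 * (n : ℝ) - (j : ℝ) + 1)) * qR n (j - 1) x := by
  unfold qR
  have := congrArg (fun p : ℝ[X] => p.eval x) (lemR3 n j)
  simpa using this

lemma iterderiv_eq (n j : ℕ) :
    iteratedDeriv j (fun y : ℝ => ((X ^ 2 - 1 : ℝ[X]) ^ n).eval y) = fun y => qR n j y := by
  induction j with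
  | zero => simp [qR, qP]
  | succ i ih =>
    rw [iteratedDeriv_succ, ih]
    funext y
    have : qR n (i + 1) y = (derivative (qP n i)).eval y := by
      unfold qR qP
      rw [Function.iterate_succ_apply']
    rw [this, ← Polynomial.deriv]
    simp only [qR]

lemma funeq (l : ℤ) (hl : 0 ≤ l) :
    (fun y : ℝ => (y ^ 2 - 1) ^ l) = fun y => ((X ^ 2 - 1 : ℝ[X]) ^ l.toNat).eval y := by
  funext y
  have h : (y ^ 2 - 1) ^ l = (y ^ 2 - 1) ^ (l.toNat : ℤ) := by
    rw [Int.toNat_of_nonneg hl]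
  rw [h, zpow_natCast]
  simp

lemma qR_degree_zero (n j : ℕ) (h : 2 * n < j) (x : ℝ) : qR n j x = 0 := by
  unfold qR qP
  rw [Polynomial.iterate_derivative_eq_zero, Polynomial.eval_zero]
  calc ((X ^ 2 - 1 : ℝ[X]) ^ n).natDegree ≤ n * (X ^ 2 - 1 : ℝ[X]).natDegree :=
        Polynomial.natDegree_pow_le
    _ ≤ n * 2 := by
        apply Nat.mul_le_mul_left
        have : (X ^ 2 - 1 : ℝ[X]) = X ^ 2 - C 1 := by simp
        rw [this, Polynomial.natDegree_X_pow_sub_C]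
    _ < j := by omega

set_option maxHeartbeats 2000000 in
lemma keyR (n k : ℕ) (hn : 1 ≤ n) (hk1 : 1 ≤ k) (hk2 : k ≤ 2 * n) (x : ℝ) :
    ((k:ℝ) * (2*(n:ℝ) - (k:ℝ) + 1) * (1 - x^2)) *
      (2*((n:ℝ)+1)*(2*(n:ℝ)+1)*((n:ℝ)*((n:ℝ)+1)*x - ((k:ℝ)-(n:ℝ))) *
        ((1-x^2) * qR n (k+1) x - ((k:ℝ)-(n:ℝ))*(1+x) * qR n k x))
    = ((k:ℝ) * (2*(n:ℝ) - (k:ℝ) + 1) * (1 - x^2)) *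
      (4*(n:ℝ)*((n:ℝ)+1)^3*(k:ℝ) *
          ((1-x^2) * qR (n-1) k x - ((k:ℝ)-(n:ℝ))*(1+x) * qR (n-1) (k-1) x)
        + (n:ℝ)^2*((n:ℝ)+1-((k:ℝ)-(n:ℝ))) *
          ((1-x^2) * qR (n+1) (k+2) x - ((k:ℝ)-(n:ℝ))*(1+x) * qR (n+1) (k+1) x)) := by
  have hcn : ((n - 1 : ℕ) : ℝ) = (n:ℝ) - 1 := by
    push_cast [Nat.cast_sub hn]; ring
  have hck : ((k - 1 : ℕ) : ℝ) = (k:ℝ) - 1 := by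
    push_cast [Nat.cast_sub hk1]; ring
  have h1 := R1E n (k+1) x
  have h2 := R1E n k x
  have h3 := R3E n k x
  have h4 := R1E (n-1) k x
  have h5 := R3E (n-1) (k-1) x
  have h6 := R1E (n-1) (k-1) x
  rw [show n - 1 + 1 = n from by omega] at h4 h6
  rw [show k - 1 + 1 = k from by omega] at h5 h6
  rw [show k + 1 - 1 = k from by omega] at h1
  rw [hcn] at h4 h5 h6
  rw [hck] at h5 h6
  push_cast at h1 h2 h3 h4 h5 h6
  rw [h1, h2, h4, h6]
  rw [h4, h6] at h3
  linear_combination (exp := 1)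
    (((-4)*(n:ℝ)^5*(k:ℝ)*x^3 + (-4)*(n:ℝ)^5*(k:ℝ)*x^2 + (4)*(n:ℝ)^5*(k:ℝ)*x + (4)*(n:ℝ)^5*(k:ℝ) + (6)*(n:ℝ)^4*(k:ℝ)^2*x^3 + (6)*(n:ℝ)^4*(k:ℝ)^2*x^2 + (-6)*(n:ℝ)^4*(k:ℝ)^2*x + (-6)*(n:ℝ)^4*(k:ℝ)^2 + (-6)*(n:ℝ)^4*(k:ℝ)*x^3 + (-6)*(n:ℝ)^4*(k:ℝ)*x^2 + (6)*(n:ℝ)^4*(k:ℝ)*x + (6)*(n:ℝ)^4*(k:ℝ) + (-2)*(n:ℝ)^3*(k:ℝ)^3*x^3 + (-2)*(n:ℝ)^3*(k:ℝ)^3*x^2 + (2)*(n:ℝ)^3*(k:ℝ)^3*x + (2)*(n:ℝ)^3*(k:ℝ)^3 + (8)*(n:ℝ)^3*(k:ℝ)^2*x^3 + (8)*(n:ℝ)^3*(k:ℝ)^2*x^2 + (-8)*(n:ℝ)^3*(k:ℝ)^2*x + (-8)*(n:ℝ)^3*(k:ℝ)^2 + (-2)*(n:ℝ)^3*(k:ℝ)*x^3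 + (-2)*(n:ℝ)^3*(k:ℝ)*x^2 + (2)*(n:ℝ)^3*(k:ℝ)*x + (2)*(n:ℝ)^3*(k:ℝ) + (-2)*(n:ℝ)^2*(k:ℝ)^3*x^3 + (-2)*(n:ℝ)^2*(k:ℝ)^3*x^2 + (2)*(n:ℝ)^2*(k:ℝ)^3*x + (2)*(n:ℝ)^2*(k:ℝ)^3 + (2)*(n:ℝ)^2*(k:ℝ)^2*x^3 + (2)*(n:ℝ)^2*(k:ℝ)^2*x^2 + (-2)*(n:ℝ)^2*(k:ℝ)^2*x + (-2)*(n:ℝ)^2*(k:ℝ)^2)) * h3 + (((8)*(n:ℝ)^6*(k:ℝ)*x^4 + (8)*(n:ℝ)^6*(k:ℝ)*x^3 + (-8)*(n:ℝ)^6*(k:ℝ)*x^2 + (-8)*(n:ℝ)^6*(k:ℝ)*x + (-4)*(n:ℝ)^5*(k:ℝ)^2*x^4 + (-12)*(n:ℝ)^5*(k:ℝ)^2*x^3 + (-4)*(n:ℝ)^5*(k:ℝ)^2*x^2 + (12)*(n:ℝ)^5*(k:ℝ)^2*x + (8)*(n:ℝ)^5*(k:ℝ)^2 + (28)*(n:ℝ)^5*(k:ℝ)*x^4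 + (28)*(n:ℝ)^5*(k:ℝ)*x^3 + (-28)*(n:ℝ)^5*(k:ℝ)*x^2 + (-28)*(n:ℝ)^5*(k:ℝ)*x + (4)*(n:ℝ)^4*(k:ℝ)^3*x^3 + (4)*(n:ℝ)^4*(k:ℝ)^3*x^2 + (-4)*(n:ℝ)^4*(k:ℝ)^3*x + (-4)*(n:ℝ)^4*(k:ℝ)^3 + (-12)*(n:ℝ)^4*(k:ℝ)^2*x^4 + (-40)*(n:ℝ)^4*(k:ℝ)^2*x^3 + (-16)*(n:ℝ)^4*(k:ℝ)^2*x^2 + (40)*(n:ℝ)^4*(k:ℝ)^2*x + (28)*(n:ℝ)^4*(k:ℝ)^2 + (36)*(n:ℝ)^4*(k:ℝ)*x^4 + (36)*(n:ℝ)^4*(k:ℝ)*x^3 + (-36)*(n:ℝ)^4*(k:ℝ)*x^2 + (-36)*(n:ℝ)^4*(k:ℝ)*x + (12)*(n:ℝ)^3*(k:ℝ)^3*x^3 + (12)*(n:ℝ)^3*(k:ℝ)^3*x^2 + (-12)*(n:ℝ)^3*(k:ℝ)^3*x + (-12)*(n:ℝ)^3*(k:ℝ)^3 + (-12)*(n:ℝ)^3*(k:ℝ)^2*x^4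 + (-48)*(n:ℝ)^3*(k:ℝ)^2*x^3 + (-24)*(n:ℝ)^3*(k:ℝ)^2*x^2 + (48)*(n:ℝ)^3*(k:ℝ)^2*x + (36)*(n:ℝ)^3*(k:ℝ)^2 + (20)*(n:ℝ)^3*(k:ℝ)*x^4 + (20)*(n:ℝ)^3*(k:ℝ)*x^3 + (-20)*(n:ℝ)^3*(k:ℝ)*x^2 + (-20)*(n:ℝ)^3*(k:ℝ)*x + (12)*(n:ℝ)^2*(k:ℝ)^3*x^3 + (12)*(n:ℝ)^2*(k:ℝ)^3*x^2 + (-12)*(n:ℝ)^2*(k:ℝ)^3*x + (-12)*(n:ℝ)^2*(k:ℝ)^3 + (-4)*(n:ℝ)^2*(k:ℝ)^2*x^4 + (-24)*(n:ℝ)^2*(k:ℝ)^2*x^3 + (-16)*(n:ℝ)^2*(k:ℝ)^2*x^2 + (24)*(n:ℝ)^2*(k:ℝ)^2*x + (20)*(n:ℝ)^2*(k:ℝ)^2 + (4)*(n:ℝ)^2*(k:ℝ)*x^4 + (4)*(n:ℝ)^2*(k:ℝ)*x^3 + (-4)*(n:ℝ)^2*(k:ℝ)*x^2 + (-4)*(n:ℝ)^2*(k:ℝ)*x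 + (4)*(n:ℝ)*(k:ℝ)^3*x^3 + (4)*(n:ℝ)*(k:ℝ)^3*x^2 + (-4)*(n:ℝ)*(k:ℝ)^3*x + (-4)*(n:ℝ)*(k:ℝ)^3 + (-4)*(n:ℝ)*(k:ℝ)^2*x^3 + (-4)*(n:ℝ)*(k:ℝ)^2*x^2 + (4)*(n:ℝ)*(k:ℝ)^2*x + (4)*(n:ℝ)*(k:ℝ)^2)) * h5

set_option maxHeartbeats 1000000 in
lemma keyZ (n : ℕ) (x : ℝ) :
    (x^2 - 1) * (2*((n:ℝ)+1)*(2*(n:ℝ)+1)*((n:ℝ)*((n:ℝ)+1)*x + (n:ℝ)) *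
        ((1-x^2) * qR n 1 x + (n:ℝ)*(1+x) * qR n 0 x))
    = (x^2 - 1) * ((n:ℝ)^2*(2*(n:ℝ)+1) *
        ((1-x^2) * qR (n+1) 2 x + (n:ℝ)*(1+x) * qR (n+1) 1 x)) := by
  have h1 := R1E n 1 x
  have h2 := R1E n 0 x
  have h3 := R3E n 0 x
  norm_num at h1 h2 h3
  rw [h1, h2]
  linear_combination (-((4*(n:ℝ)^3 + 6*(n:ℝ)^2 + 2*(n:ℝ)) * (x^3 + x^2 - x - 1))) * h3


lemma sq_eq (a b : ℝ) (ha : 0 ≤ a) (hb : 0 ≤ b) (h : a ^ 2 = b ^ 2) : a = b := by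
  have h2 := congrArg Real.sqrt h
  rwa [Real.sqrt_sq ha, Real.sqrt_sq hb] at h2

set_option maxHeartbeats 2000000 in
lemma const2 (l m : ℤ) (hl : 1 ≤ l) (hm1 : -l ≤ m) (hm2 : m ≤ l) :
    zetalm (l + 1) m *
      (1 / Real.sqrt ((((l : ℝ) + 1)) * (((l : ℝ) + 1) + 1)) * clm (l + 1) m *
        ((-1 : ℝ) ^ m / ((2 : ℝ) ^ (l + 1) * ((l + 1).toNat.factorial : ℝ))))
    = (1 / Real.sqrt ((l : ℝ) * ((l : ℝ) + 1)) * clm l m *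
        ((-1 : ℝ) ^ m / ((2 : ℝ) ^ l * (l.toNat.factorial : ℝ)))) *
      ((l : ℝ) * (((l : ℝ) + 1) - (m : ℝ)) / (2 * ((l : ℝ) + 1) ^ 2 * (2 * (l : ℝ) + 1))) := by
  have hlr : (1 : ℝ) ≤ (l : ℝ) := by exact_mod_cast hl
  have hm1r : -(l : ℝ) ≤ (m : ℝ) := by exact_mod_cast hm1
  have hm2r : (m : ℝ) ≤ (l : ℝ) := by exact_mod_cast hm2
  have hfl : (0 : ℝ) < (l.toNat.factorial : ℝ) := by exact_mod_cast l.toNat.factorial_pos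
  have hflm : (0 : ℝ) < ((l - m).toNat.factorial : ℝ) := by
    exact_mod_cast (l - m).toNat.factorial_pos
  have hflp : (0 : ℝ) < ((l + m).toNat.factorial : ℝ) := by
    exact_mod_cast (l + m).toNat.factorial_pos
  have hpow : (0 : ℝ) < (2 : ℝ) ^ l := by positivity
  have hcast1 : ((l.toNat : ℕ) : ℝ) = (l : ℝ) := by
    exact_mod_cast Int.toNat_of_nonneg (by omega : (0:ℤ) ≤ l)
  have hcast2 : (((l - m).toNat : ℕ) : ℝ) = (l : ℝ) - (m : ℝ) := by
    exact_mod_cast Int.toNat_of_nonneg (by omega : (0:ℤ) ≤ l - m)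
  have hcast3 : (((l + m).toNat : ℕ) : ℝ) = (l : ℝ) + (m : ℝ) := by
    exact_mod_cast Int.toNat_of_nonneg (by omega : (0:ℤ) ≤ l + m)
  -- factorial recursions
  have hfact1 : (((l + 1).toNat.factorial : ℝ)) = ((l : ℝ) + 1) * (l.toNat.factorial : ℝ) := by
    have h : (l + 1).toNat = l.toNat + 1 := by omega
    rw [h, Nat.factorial_succ]
    push_cast
    rw [hcast1]
  have hfact2 : (((l + 1 - m).toNat.factorial : ℝ))
      = (((l : ℝ) + 1) - (m : ℝ)) * ((l - m).toNat.factorial : ℝ) := by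
    have h : (l + 1 - m).toNat = (l - m).toNat + 1 := by omega
    rw [h, Nat.factorial_succ]
    push_cast
    rw [hcast2]
    ring
  have hfact3 : (((l + 1 + m).toNat.factorial : ℝ))
      = (((l : ℝ) + 1) + (m : ℝ)) * ((l + m).toNat.factorial : ℝ) := by
    have h : (l + 1 + m).toNat = (l + m).toNat + 1 := by omega
    rw [h, Nat.factorial_succ]
    push_cast
    rw [hcast3]
    ring
  have hzpow : (2 : ℝ) ^ (l + 1) = 2 * (2 : ℝ) ^ l := by
    rw [zpow_add_one₀ (two_ne_zero)]
    ring
  -- rewrite defs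
  unfold zetalm clm
  push_cast
  rw [hfact1, hfact2, hfact3, hzpow]
  have key :
      (1 / ((l:ℝ)+1)) * Real.sqrt (((l:ℝ)+1+1)*((l:ℝ)+1-1)*((l:ℝ)+1+(m:ℝ))*((l:ℝ)+1-(m:ℝ)) /
          ((2*((l:ℝ)+1)+1)*(2*((l:ℝ)+1)-1))) *
        (1 / Real.sqrt (((l:ℝ)+1)*((l:ℝ)+1+1)) *
          Real.sqrt ((2*((l:ℝ)+1)+1)/2*(((l:ℝ)+1-(m:ℝ))*((l - m).toNat.factorial : ℝ)) /
            ((((l:ℝ)+1+(m:ℝ))*((l + m).toNat.factorial : ℝ)))) *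
          (1 / (2*(2:ℝ)^l*(((l:ℝ)+1)*(l.toNat.factorial : ℝ)))))
      = 1 / Real.sqrt ((l:ℝ)*((l:ℝ)+1)) *
          Real.sqrt ((2*(l:ℝ)+1)/2*((l - m).toNat.factorial : ℝ)/((l + m).toNat.factorial : ℝ)) *
          (1/((2:ℝ)^l*(l.toNat.factorial : ℝ))) *
          ((l:ℝ)*((l:ℝ)+1-(m:ℝ))/(2*((l:ℝ)+1)^2*(2*(l:ℝ)+1))) := by
    have hZ : (0:ℝ) ≤ ((l:ℝ)+1+1)*((l:ℝ)+1-1)*((l:ℝ)+1+(m:ℝ))*((l:ℝ)+1-(m:ℝ)) /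
        ((2*((l:ℝ)+1)+1)*(2*((l:ℝ)+1)-1)) := by
      apply div_nonneg
      · apply mul_nonneg
        apply mul_nonneg
        apply mul_nonneg
        all_goals linarith
      · nlinarith
    have hC1 : (0:ℝ) ≤ (2*((l:ℝ)+1)+1)/2*(((l:ℝ)+1-(m:ℝ))*((l - m).toNat.factorial : ℝ)) /
        ((((l:ℝ)+1+(m:ℝ))*((l + m).toNat.factorial : ℝ))) := by
      apply div_nonneg
      · apply mul_nonneg
        · apply div_nonneg <;> linarith
        · apply mul_nonneg <;> linarith
      · apply mul_nonneg <;> linarith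
    have hC0 : (0:ℝ) ≤ (2*(l:ℝ)+1)/2*((l - m).toNat.factorial : ℝ)/((l + m).toNat.factorial : ℝ) := by
      apply div_nonneg
      · apply mul_nonneg
        · apply div_nonneg <;> linarith
        · linarith
      · linarith
    have hS1 : (0:ℝ) ≤ ((l:ℝ)+1)*((l:ℝ)+1+1) := by nlinarith
    have hS0 : (0:ℝ) ≤ (l:ℝ)*((l:ℝ)+1) := by nlinarith
    have hS1p : (0:ℝ) < Real.sqrt (((l:ℝ)+1)*((l:ℝ)+1+1)) := by
      apply Real.sqrt_pos.mpr; nlinarith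
    have hS0p : (0:ℝ) < Real.sqrt ((l:ℝ)*((l:ℝ)+1)) := by
      apply Real.sqrt_pos.mpr; nlinarith
    apply sq_eq
    · apply mul_nonneg
      apply mul_nonneg
      · apply div_nonneg <;> [exact zero_le_one; linarith]
      · exact Real.sqrt_nonneg _
      apply mul_nonneg
      apply mul_nonneg
      · positivity
      · exact Real.sqrt_nonneg _
      · positivity
    · apply mul_nonneg
      apply mul_nonneg
      apply mul_nonneg
      · positivity
      · exact Real.sqrt_nonneg _
      · positivity
      · apply div_nonneg
        · apply mul_nonneg <;> linarith
        · nlinarith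
    simp only [mul_pow, div_pow, one_pow]
    rw [Real.sq_sqrt hZ, Real.sq_sqrt hC1, Real.sq_sqrt hC0, Real.sq_sqrt hS1, Real.sq_sqrt hS0]
    have hne1 : ((l:ℝ)+1) ≠ 0 := by linarith
    have hne2 : ((l:ℝ)) ≠ 0 := by linarith
    have hne3 : (2*(l:ℝ)+1) ≠ 0 := by linarith
    have hne4 : (2*(l:ℝ)+3) ≠ 0 := by linarith
    have hne5 : ((l:ℝ)+1+(m:ℝ)) ≠ 0 := by linarith
    have hne6 : ((l:ℝ)+2) ≠ 0 := by linarith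
    have hne7 : ((2:ℝ)^l) ≠ 0 := ne_of_gt hpow
    have hne8 : (l.toNat.factorial : ℝ) ≠ 0 := ne_of_gt hfl
    have hne9 : ((l - m).toNat.factorial : ℝ) ≠ 0 := ne_of_gt hflm
    have hne10 : ((l + m).toNat.factorial : ℝ) ≠ 0 := ne_of_gt hflp
    have hneA : ((2:ℝ)*((l:ℝ)+1)+1) ≠ 0 := by linarith
    have hneB : ((2:ℝ)*((l:ℝ)+1)-1) ≠ 0 := by linarith
    have hneC : ((l:ℝ)+1+1) ≠ 0 := by linarith
    rw [div_mul_eq_mul_div, div_mul_eq_mul_div]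
    rw [show (2:ℝ)*((l:ℝ)+1)-1 = 2*(l:ℝ)+1 by ring]
    field_simp
    ring
  linear_combination ((-1:ℝ)^m) * key

set_option maxHeartbeats 2000000 in
lemma const1 (l m : ℤ) (hl : 2 ≤ l) (hm1 : -(l-1) ≤ m) (hm2 : m ≤ l - 1) :
    zetalm l m *
      (1 / Real.sqrt ((((l : ℝ) - 1)) * (((l : ℝ) - 1) + 1)) * clm (l - 1) m *
        ((-1 : ℝ) ^ m / ((2 : ℝ) ^ (l - 1) * ((l - 1).toNat.factorial : ℝ))))
    = (1 / Real.sqrt ((l : ℝ) * ((l : ℝ) + 1)) * clm l m *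
        ((-1 : ℝ) ^ m / ((2 : ℝ) ^ l * (l.toNat.factorial : ℝ)))) *
      (2 * ((l : ℝ) + 1) * ((l : ℝ) + (m : ℝ)) / (2 * (l : ℝ) + 1)) := by
  have hlr : (2 : ℝ) ≤ (l : ℝ) := by exact_mod_cast hl
  have hm1r : -((l : ℝ) - 1) ≤ (m : ℝ) := by
    have : -(l - 1) ≤ m := hm1
    have h2 : ((-(l-1) : ℤ) : ℝ) ≤ ((m : ℤ) : ℝ) := by exact_mod_cast this
    push_cast at h2
    linarith
  have hm2r : (m : ℝ) ≤ (l : ℝ) - 1 := by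
    have h2 : ((m : ℤ) : ℝ) ≤ ((l - 1 : ℤ) : ℝ) := by exact_mod_cast hm2
    push_cast at h2
    linarith
  have hfl : (0 : ℝ) < (l.toNat.factorial : ℝ) := by exact_mod_cast l.toNat.factorial_pos
  have hflm : (0 : ℝ) < ((l - 1 - m).toNat.factorial : ℝ) := by
    exact_mod_cast (l - 1 - m).toNat.factorial_pos
  have hflp : (0 : ℝ) < ((l - 1 + m).toNat.factorial : ℝ) := by
    exact_mod_cast (l - 1 + m).toNat.factorial_pos
  have hpow : (0 : ℝ) < (2 : ℝ) ^ l := by positivity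
  have hcast1 : ((l.toNat : ℕ) : ℝ) = (l : ℝ) := by
    exact_mod_cast Int.toNat_of_nonneg (by omega : (0:ℤ) ≤ l)
  have hcast2 : (((l - 1 - m).toNat : ℕ) : ℝ) = (l : ℝ) - 1 - (m : ℝ) := by
    exact_mod_cast Int.toNat_of_nonneg (by omega : (0:ℤ) ≤ l - 1 - m)
  have hcast3 : (((l - 1 + m).toNat : ℕ) : ℝ) = (l : ℝ) - 1 + (m : ℝ) := by
    exact_mod_cast Int.toNat_of_nonneg (by omega : (0:ℤ) ≤ l - 1 + m)
  have hfact1 : (l.toNat.factorial : ℝ) = (l : ℝ) * ((l - 1).toNat.factorial : ℝ) := by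
    have h : l.toNat = (l - 1).toNat + 1 := by omega
    rw [h, Nat.factorial_succ]
    push_cast
    rw [show (((l - 1).toNat : ℕ) : ℝ) = (l : ℝ) - 1 from by
      exact_mod_cast Int.toNat_of_nonneg (by omega : (0:ℤ) ≤ l - 1)]
    ring
  have hfact2 : ((l - m).toNat.factorial : ℝ)
      = ((l : ℝ) - (m : ℝ)) * ((l - 1 - m).toNat.factorial : ℝ) := by
    have h : (l - m).toNat = (l - 1 - m).toNat + 1 := by omega
    rw [h, Nat.factorial_succ]
    push_cast
    rw [hcast2]
    ring
  have hfact3 : ((l + m).toNat.factorial : ℝ)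
      = ((l : ℝ) + (m : ℝ)) * ((l - 1 + m).toNat.factorial : ℝ) := by
    have h : (l + m).toNat = (l - 1 + m).toNat + 1 := by omega
    rw [h, Nat.factorial_succ]
    push_cast
    rw [hcast3]
    ring
  have hzpow : (2 : ℝ) ^ l = 2 * (2 : ℝ) ^ (l - 1) := by
    rw [zpow_sub₀ (two_ne_zero), zpow_one]
    field_simp
  unfold zetalm clm
  push_cast
  rw [hfact1, hfact2, hfact3, hzpow]
  have key :
      (1 / (l:ℝ)) * Real.sqrt (((l:ℝ)+1)*((l:ℝ)-1)*((l:ℝ)+(m:ℝ))*((l:ℝ)-(m:ℝ)) /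
          ((2*(l:ℝ)+1)*(2*(l:ℝ)-1))) *
        (1 / Real.sqrt (((l:ℝ)-1)*(((l:ℝ)-1)+1)) *
          Real.sqrt ((2*((l:ℝ)-1)+1)/2*((l - 1 - m).toNat.factorial : ℝ) /
            ((l - 1 + m).toNat.factorial : ℝ)) *
          (1 / ((2:ℝ)^(l-1)*((l - 1).toNat.factorial : ℝ))))
      = 1 / Real.sqrt ((l:ℝ)*((l:ℝ)+1)) *
          Real.sqrt ((2*(l:ℝ)+1)/2*(((l:ℝ)-(m:ℝ))*((l - 1 - m).toNat.factorial : ℝ)) /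
            (((l:ℝ)+(m:ℝ))*((l - 1 + m).toNat.factorial : ℝ))) *
          (1/(2*(2:ℝ)^(l-1)*((l:ℝ)*((l - 1).toNat.factorial : ℝ)))) *
          (2*((l:ℝ)+1)*((l:ℝ)+(m:ℝ))/(2*(l:ℝ)+1)) := by
    have hZ : (0:ℝ) ≤ ((l:ℝ)+1)*((l:ℝ)-1)*((l:ℝ)+(m:ℝ))*((l:ℝ)-(m:ℝ)) /
        ((2*(l:ℝ)+1)*(2*(l:ℝ)-1)) := by
      apply div_nonneg
      · apply mul_nonneg
        apply mul_nonneg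
        apply mul_nonneg
        all_goals linarith
      · nlinarith
    have hC1 : (0:ℝ) ≤ (2*((l:ℝ)-1)+1)/2*((l - 1 - m).toNat.factorial : ℝ) /
        ((l - 1 + m).toNat.factorial : ℝ) := by
      apply div_nonneg
      · apply mul_nonneg
        · apply div_nonneg <;> linarith
        · linarith
      · linarith
    have hC0 : (0:ℝ) ≤ (2*(l:ℝ)+1)/2*(((l:ℝ)-(m:ℝ))*((l - 1 - m).toNat.factorial : ℝ)) /
        (((l:ℝ)+(m:ℝ))*((l - 1 + m).toNat.factorial : ℝ)) := by
      apply div_nonneg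
      · apply mul_nonneg
        · apply div_nonneg <;> linarith
        · apply mul_nonneg <;> linarith
      · apply mul_nonneg <;> linarith
    have hS1 : (0:ℝ) ≤ ((l:ℝ)-1)*(((l:ℝ)-1)+1) := by nlinarith
    have hS0 : (0:ℝ) ≤ (l:ℝ)*((l:ℝ)+1) := by nlinarith
    have hpow1 : (0:ℝ) < (2:ℝ)^(l-1) := by positivity
    have hfl1 : (0 : ℝ) < ((l-1).toNat.factorial : ℝ) := by
      exact_mod_cast (l-1).toNat.factorial_pos
    apply sq_eq
    · apply mul_nonneg
      apply mul_nonneg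
      · apply div_nonneg <;> [exact zero_le_one; linarith]
      · exact Real.sqrt_nonneg _
      apply mul_nonneg
      apply mul_nonneg
      · positivity
      · exact Real.sqrt_nonneg _
      · positivity
    · apply mul_nonneg
      apply mul_nonneg
      apply mul_nonneg
      · positivity
      · exact Real.sqrt_nonneg _
      · positivity
      · apply div_nonneg
        · apply mul_nonneg
          apply mul_nonneg
          · linarith
          · linarith
          · linarith
        · linarith
    simp only [mul_pow, div_pow, one_pow]
    rw [Real.sq_sqrt hZ, Real.sq_sqrt hC1, Real.sq_sqrt hC0, Real.sq_sqrt hS1, Real.sq_sqrt hS0]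
    have hne1 : ((l:ℝ)+1) ≠ 0 := by linarith
    have hne2 : ((l:ℝ)) ≠ 0 := by linarith
    have hne3 : (2*(l:ℝ)+1) ≠ 0 := by linarith
    have hne4 : (2*(l:ℝ)-1) ≠ 0 := by linarith
    have hne5 : ((l:ℝ)+(m:ℝ)) ≠ 0 := by linarith
    have hne6 : ((l:ℝ)-1) ≠ 0 := by linarith
    have hne7 : ((2:ℝ)^(l-1)) ≠ 0 := ne_of_gt hpow1
    have hne8 : ((l-1).toNat.factorial : ℝ) ≠ 0 := ne_of_gt hfl1
    have hne9 : ((l - 1 - m).toNat.factorial : ℝ) ≠ 0 := ne_of_gt hflm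
    have hne10 : ((l - 1 + m).toNat.factorial : ℝ) ≠ 0 := ne_of_gt hflp
    have hneC : ((l:ℝ)-1+1) ≠ 0 := by linarith
    have hneD : (2*((l:ℝ)-1)+1) ≠ 0 := by linarith
    rw [div_mul_eq_mul_div, div_mul_eq_mul_div]
    rw [show (2:ℝ)*((l:ℝ)-1)+1 = 2*(l:ℝ)-1 by ring]
    field_simp
    ring_nf
    have hne4' : (-1 + (l:ℝ)*2) ≠ 0 := by linarith
    field_simp
    ring
  linear_combination ((-1:ℝ)^m) * key

lemma FL (l m : ℤ) (hl : 1 ≤ l) (hm : |m| ≤ l) (x : ℝ) (hx1 : -1 < x) (hx2 : x < 1) :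
    Flm l m x = (1 / Real.sqrt ((l : ℝ) * ((l : ℝ) + 1))) * clm l m
      * ((-1 : ℝ) ^ m / ((2 : ℝ) ^ l * (l.toNat.factorial : ℝ)))
      * (1 - x ^ 2) ^ (((m : ℝ) - 1) / 2)
      * ((1 - x ^ 2) * qR l.toNat ((l + m).toNat + 1) x
          - (m : ℝ) * (1 + x) * qR l.toNat ((l + m).toNat) x) := by
  have hu : 0 < 1 - x ^ 2 := by nlinarith
  set K := (l + m).toNat with hK
  set n := l.toNat with hn
  set α := ((-1 : ℝ) ^ m / ((2 : ℝ) ^ l * (l.toNat.factorial : ℝ))) with hα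
  have hUfun : Ulm l m = fun y => (clm l m * α) * ((1 - y ^ 2) ^ ((m : ℝ) / 2) * qR n K y) := by
    funext y
    simp only [Ulm, Plm, if_pos hm]
    rw [funeq l (by omega), iterderiv_eq]
    ring
  have hqd : derivative (qP n K) = qP n (K + 1) := by
    unfold qP
    rw [Function.iterate_succ_apply']
  have hq1 : HasDerivAt (fun y => qR n K y) (qR n (K + 1) x) x := by
    have h := Polynomial.hasDerivAt (qP n K) x
    rw [hqd] at h
    exact h
  have h1 : HasDerivAt (fun y : ℝ => 1 - y ^ 2) (-(2 * x)) x := by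
    simpa using ((hasDerivAt_pow 2 x).const_sub 1)
  have hrp : HasDerivAt (fun y : ℝ => (1 - y ^ 2) ^ ((m : ℝ) / 2))
      ((-(2 * x)) * ((m : ℝ) / 2) * (1 - x ^ 2) ^ ((m : ℝ) / 2 - 1)) x := by
    have := h1.rpow_const (p := (m : ℝ) / 2) (Or.inl (ne_of_gt hu))
    simpa using this
  have hU : HasDerivAt (Ulm l m)
      ((clm l m * α) * ((-(2 * x)) * ((m : ℝ) / 2) * (1 - x ^ 2) ^ ((m : ℝ) / 2 - 1) * qR n K x
        + (1 - x ^ 2) ^ ((m : ℝ) / 2) * qR n (K + 1) x)) x := by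
    rw [hUfun]
    exact (hrp.mul hq1).const_mul (clm l m * α)
  have hderiv := hU.deriv
  have hUx : Ulm l m x = clm l m * α * ((1 - x ^ 2) ^ ((m : ℝ) / 2) * qR n K x) := by
    rw [hUfun]
  simp only [Flm]
  rw [hderiv, hUx]
  have hsq : Real.sqrt (1 - x ^ 2) = (1 - x ^ 2) ^ ((1 : ℝ) / 2) := Real.sqrt_eq_rpow _
  rw [hsq]
  have e1 : (1 - x ^ 2) ^ ((1 : ℝ) / 2) * (1 - x ^ 2) ^ ((m : ℝ) / 2 - 1)
      = (1 - x ^ 2) ^ (((m : ℝ) - 1) / 2) := by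
    rw [← Real.rpow_add hu]; congr 1; ring
  have e2 : (1 - x ^ 2) ^ ((1 : ℝ) / 2) * (1 - x ^ 2) ^ ((m : ℝ) / 2)
      = (1 - x ^ 2) ^ (((m : ℝ) - 1) / 2) * (1 - x ^ 2) := by
    rw [← Real.rpow_add hu]
    have h3 : (1 : ℝ) / 2 + (m : ℝ) / 2 = ((m : ℝ) - 1) / 2 + 1 := by ring
    rw [h3, Real.rpow_add_one (ne_of_gt hu)]
  have e3 : (1 - x ^ 2) ^ ((m : ℝ) / 2) / (1 - x ^ 2) ^ ((1 : ℝ) / 2)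
      = (1 - x ^ 2) ^ (((m : ℝ) - 1) / 2) := by
    rw [← Real.rpow_sub hu]; congr 1; ring
  set S := (1 / Real.sqrt ((l : ℝ) * ((l : ℝ) + 1)))
  linear_combination (S * clm l m * α) *
    ((-(x * (m : ℝ) * qR n K x)) * e1 + qR n (K + 1) x * e2 + (-((m : ℝ) * qR n K x)) * e3)

set_option maxHeartbeats 4000000 in
/-- Three-term recurrence relation for `F_{lm}`.  (With the definition used here,
`F_{l'm} = 0` automatically whenever `l' < max(1, |m|)`.) -/
theorem Flm_three_term_recurrence (l m : ℤ) (hl : 1 ≤ l) (hm₁ : -l ≤ m) (hm₂ : m ≤ l)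
    (x : ℝ) (hx : x ∈ Set.Ioo (-1 : ℝ) 1) :
    (x - (m : ℝ) / ((l : ℝ) * ((l : ℝ) + 1))) * Flm l m x =
      zetalm l m * Flm (l - 1) m x + zetalm (l + 1) m * Flm (l + 1) m x := by
  obtain ⟨hx1, hx2⟩ := hx
  have hu : 0 < 1 - x ^ 2 := by nlinarith
  have hlr : (1 : ℝ) ≤ (l : ℝ) := by exact_mod_cast hl
  have hm1r : -(l : ℝ) ≤ (m : ℝ) := by exact_mod_cast hm₁
  have hm2r : (m : ℝ) ≤ (l : ℝ) := by exact_mod_cast hm₂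
  have hcl : ((l.toNat : ℕ) : ℝ) = (l : ℝ) := by
    exact_mod_cast Int.toNat_of_nonneg (by omega : (0:ℤ) ≤ l)
  have hck : (((l + m).toNat : ℕ) : ℝ) = (l : ℝ) + (m : ℝ) := by
    exact_mod_cast Int.toNat_of_nonneg (by omega : (0:ℤ) ≤ l + m)
  have hlne : (l:ℝ) ≠ 0 := by linarith
  have hl1ne : ((l:ℝ)+1) ≠ 0 := by linarith
  have h2lne : (2*(l:ℝ)+1) ≠ 0 := by linarith
  have hM : (2*(l:ℝ)*((l:ℝ)+1)^2*(2*(l:ℝ)+1)) ≠ 0 :=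
    mul_ne_zero (mul_ne_zero (mul_ne_zero two_ne_zero hlne) (pow_ne_zero 2 hl1ne)) h2lne
  have hμ : (2*(l:ℝ)*((l:ℝ)+1)^2*(2*(l:ℝ)+1)) * (x - (m:ℝ)/((l:ℝ)*((l:ℝ)+1)))
      = 2*((l:ℝ)+1)*(2*(l:ℝ)+1)*((l:ℝ)*((l:ℝ)+1)*x - (m:ℝ)) := by
    field_simp
  have hc1 : (2*(l:ℝ)*((l:ℝ)+1)^2*(2*(l:ℝ)+1)) * (2*((l:ℝ)+1)*((l:ℝ)+(m:ℝ))/(2*(l:ℝ)+1))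
      = 4*(l:ℝ)*((l:ℝ)+1)^3*((l:ℝ)+(m:ℝ)) := by
    field_simp
    ring
  have hc2 : (2*(l:ℝ)*((l:ℝ)+1)^2*(2*(l:ℝ)+1)) *
        ((l:ℝ)*(((l:ℝ)+1)-(m:ℝ))/(2*((l:ℝ)+1)^2*(2*(l:ℝ)+1)))
      = (l:ℝ)^2*((l:ℝ)+1-(m:ℝ)) := by
    field_simp
  -- the main F expansion at level l
  have hFl := FL l m hl (abs_le.mpr ⟨hm₁, hm₂⟩) x hx1 hx2
  -- level l+1
  have hFp := FL (l + 1) m (by omega) (by rw [abs_le]; constructor <;> omega) x hx1 hx2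
  rw [show (l + 1).toNat = l.toNat + 1 from by omega,
      show (l + 1 + m).toNat = (l + m).toNat + 1 from by omega,
      show (l + m).toNat + 1 + 1 = (l + m).toNat + 2 from rfl] at hFp
  push_cast at hFp
  have hC2 := const2 l m hl hm₁ hm₂
  rw [show (l + 1).toNat = l.toNat + 1 from by omega] at hC2
  have hT2 : zetalm (l + 1) m * Flm (l + 1) m x
      = (1 / Real.sqrt ((l:ℝ) * ((l:ℝ) + 1)) * clm l m *
          ((-1:ℝ) ^ m / ((2:ℝ) ^ l * (l.toNat.factorial : ℝ)))) *
        ((l:ℝ) * (((l:ℝ) + 1) - (m:ℝ)) / (2 * ((l:ℝ) + 1) ^ 2 * (2 * (l:ℝ) + 1))) *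
        ((1 - x ^ 2) ^ (((m:ℝ) - 1) / 2)) *
        ((1 - x ^ 2) * qR (l.toNat + 1) ((l + m).toNat + 2) x
          - (m:ℝ) * (1 + x) * qR (l.toNat + 1) ((l + m).toNat + 1) x) := by
    rw [hFp]
    linear_combination (((1 - x ^ 2) ^ (((m:ℝ) - 1) / 2)) *
      ((1 - x ^ 2) * qR (l.toNat + 1) ((l + m).toNat + 2) x
        - (m:ℝ) * (1 + x) * qR (l.toNat + 1) ((l + m).toNat + 1) x)) * hC2
  by_cases hmneg : m = -l
  · -- k = 0 branch
    have hk0 : (l + m).toNat = 0 := by omega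
    have hmr : (m:ℝ) = -(l:ℝ) := by rw [hmneg]; push_cast; ring
    have hT1 : zetalm l m * Flm (l - 1) m x = 0 := by
      have hU0 : Ulm (l - 1) m = fun _ => 0 := by
        funext y
        exact if_neg (by rw [abs_le]; omega)
      have : Flm (l - 1) m x = 0 := by
        simp [Flm, hU0]
      rw [this, mul_zero]
    have hx2ne : (x ^ 2 - 1) ≠ 0 := by nlinarith
    have kp := mul_left_cancel₀ hx2ne (keyZ l.toNat x)
    rw [hcl] at kp
    rw [hk0] at hFl hT2
    simp only [Nat.zero_add] at hFl hT2
    rw [hmr] at hFl hT2 hμ hc2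
    apply mul_left_cancel₀ hM
    rw [hFl, hT1, hT2, hmr]
    linear_combination
      ((1 / Real.sqrt ((l:ℝ) * ((l:ℝ) + 1)) * clm l m *
          ((-1:ℝ) ^ m / ((2:ℝ) ^ l * (l.toNat.factorial : ℝ)))) *
        ((1 - x ^ 2) ^ ((-(l:ℝ) - 1) / 2)) *
        ((1 - x ^ 2) * qR l.toNat 1 x - (-(l:ℝ)) * (1 + x) * qR l.toNat 0 x)) * hμ
      + ((1 / Real.sqrt ((l:ℝ) * ((l:ℝ) + 1)) * clm l m *
          ((-1:ℝ) ^ m / ((2:ℝ) ^ l * (l.toNat.factorial : ℝ)))) *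
        ((1 - x ^ 2) ^ ((-(l:ℝ) - 1) / 2))) * kp
      - ((1 / Real.sqrt ((l:ℝ) * ((l:ℝ) + 1)) * clm l m *
          ((-1:ℝ) ^ m / ((2:ℝ) ^ l * (l.toNat.factorial : ℝ)))) *
        ((1 - x ^ 2) ^ ((-(l:ℝ) - 1) / 2)) *
        ((1 - x ^ 2) * qR (l.toNat + 1) 2 x - (-(l:ℝ)) * (1 + x) * qR (l.toNat + 1) 1 x)) * hc2
  · -- k ≥ 1 branch
    have hk1 : 1 ≤ (l + m).toNat := by omega
    have hT1 : zetalm l m * Flm (l - 1) m x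
        = (1 / Real.sqrt ((l:ℝ) * ((l:ℝ) + 1)) * clm l m *
            ((-1:ℝ) ^ m / ((2:ℝ) ^ l * (l.toNat.factorial : ℝ)))) *
          (2 * ((l:ℝ) + 1) * ((l:ℝ) + (m:ℝ)) / (2 * (l:ℝ) + 1)) *
          ((1 - x ^ 2) ^ (((m:ℝ) - 1) / 2)) *
          ((1 - x ^ 2) * qR (l.toNat - 1) ((l + m).toNat) x
            - (m:ℝ) * (1 + x) * qR (l.toNat - 1) ((l + m).toNat - 1) x) := by
      by_cases hgen : 2 ≤ l ∧ -(l-1) ≤ m ∧ m ≤ l - 1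
      · obtain ⟨hg1, hg2, hg3⟩ := hgen
        have hFm := FL (l - 1) m (by omega) (by rw [abs_le]; constructor <;> omega) x hx1 hx2
        rw [show (l - 1).toNat = l.toNat - 1 from by omega,
            show (l - 1 + m).toNat = (l + m).toNat - 1 from by omega,
            show (l + m).toNat - 1 + 1 = (l + m).toNat from by omega] at hFm
        push_cast at hFm
        have hC1 := const1 l m hg1 hg2 hg3
        rw [show (l - 1).toNat = l.toNat - 1 from by omega] at hC1
        rw [hFm]
        linear_combination (((1 - x ^ 2) ^ (((m:ℝ) - 1) / 2)) *
          ((1 - x ^ 2) * qR (l.toNat - 1) ((l + m).toNat) x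
            - (m:ℝ) * (1 + x) * qR (l.toNat - 1) ((l + m).toNat - 1) x)) * hC1
      · -- degenerate cases : m = l, or l = 1 ∧ m = 0
        have hcases : m = l ∨ (l = 1 ∧ m = 0) := by omega
        have hL0 : zetalm l m * Flm (l - 1) m x = 0 := by
          rcases hcases with h | ⟨h1, h2⟩
          · have hU0 : Ulm (l - 1) m = fun _ => 0 := by
              funext y
              exact if_neg (by rw [abs_le]; omega)
            have : Flm (l - 1) m x = 0 := by simp [Flm, hU0]
            rw [this, mul_zero]
          · subst h1; subst h2
            have : Flm (1 - 1) 0 x = 0 := by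
              norm_num [Flm]
            rw [this, mul_zero]
        rw [hL0]
        rcases hcases with h | ⟨h1, h2⟩
        · have hz1 : qR (l.toNat - 1) ((l + m).toNat) x = 0 :=
            qR_degree_zero _ _ (by omega) x
          have hz2 : qR (l.toNat - 1) ((l + m).toNat - 1) x = 0 :=
            qR_degree_zero _ _ (by omega) x
          rw [hz1, hz2]
          ring
        · subst h1; subst h2
          have hz1 : qR (1 - 1 : ℤ).toNat ((1 + 0 : ℤ).toNat) x = 0 := by
            apply qR_degree_zero
            omega
          have hm0 : ((0 : ℤ) : ℝ) = 0 := by norm_num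
          rw [show ((1:ℤ).toNat - 1) = (1 - 1 : ℤ).toNat from by omega] at *
          rw [hz1]
          norm_num
        -- done degenerate
    -- key identity
    have kpre := keyR l.toNat (l + m).toNat (by omega) hk1 (by omega) x
    rw [hcl, hck] at kpre
    have hMk : (((l:ℝ) + (m:ℝ)) * (2*(l:ℝ) - ((l:ℝ)+(m:ℝ)) + 1) * (1 - x^2)) ≠ 0 := by
      have f1 : (0:ℝ) < (l:ℝ) + (m:ℝ) := by
        have : 1 ≤ l + m := by omega
        have := (by exact_mod_cast this : (1:ℝ) ≤ (l:ℝ) + (m:ℝ))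
        linarith
      have f2 : (0:ℝ) < 2*(l:ℝ) - ((l:ℝ)+(m:ℝ)) + 1 := by linarith
      positivity
    have kp := mul_left_cancel₀ hMk kpre
    apply mul_left_cancel₀ hM
    rw [hFl, hT1, hT2]
    linear_combination
      ((1 / Real.sqrt ((l:ℝ) * ((l:ℝ) + 1)) * clm l m *
          ((-1:ℝ) ^ m / ((2:ℝ) ^ l * (l.toNat.factorial : ℝ)))) *
        ((1 - x ^ 2) ^ (((m:ℝ) - 1) / 2)) *
        ((1 - x ^ 2) * qR l.toNat ((l + m).toNat + 1) x
          - (m:ℝ) * (1 + x) * qR l.toNat ((l + m).toNat) x)) * hμ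
      + ((1 / Real.sqrt ((l:ℝ) * ((l:ℝ) + 1)) * clm l m *
          ((-1:ℝ) ^ m / ((2:ℝ) ^ l * (l.toNat.factorial : ℝ)))) *
        ((1 - x ^ 2) ^ (((m:ℝ) - 1) / 2))) * kp
      - ((1 / Real.sqrt ((l:ℝ) * ((l:ℝ) + 1)) * clm l m *
          ((-1:ℝ) ^ m / ((2:ℝ) ^ l * (l.toNat.factorial : ℝ)))) *
        ((1 - x ^ 2) ^ (((m:ℝ) - 1) / 2)) *
        ((1 - x ^ 2) * qR (l.toNat - 1) ((l + m).toNat) x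
          - (m:ℝ) * (1 + x) * qR (l.toNat - 1) ((l + m).toNat - 1) x)) * hc1
      - ((1 / Real.sqrt ((l:ℝ) * ((l:ℝ) + 1)) * clm l m *
          ((-1:ℝ) ^ m / ((2:ℝ) ^ l * (l.toNat.factorial : ℝ)))) *
        ((1 - x ^ 2) ^ (((m:ℝ) - 1) / 2)) *
        ((1 - x ^ 2) * qR (l.toNat + 1) ((l + m).toNat + 2) x
          - (m:ℝ) * (1 + x) * qR (l.toNat + 1) ((l + m).toNat + 1) x)) * hc2
end

section
/- Derivative recurrence (lowering form) for F_{lm}: for all integers l ≥ 1, −l ≤ m ≤ l, and all x ∈ (−1, 1), (1 − x^2) F_{lm}'(x) = −l (x − m/l^2) F_{lm}(x) + (2l + 1) ζ_{lm} F_{l−1,m}(x), where ζ_{lm} := (1/l)·√((l+1)(l−1)(l+m)(l−m)/((2l+1)(2l−1))) and F_{l'm} := 0 whenever l' < max(1, |m|). -/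
open MeasureTheory

section PolyAux
open Polynomial

noncomputable def pp (L : ℕ) : ℝ[X] := ((X:ℝ[X])^2 - 1)^L

lemma pp_eval (L : ℕ) (y : ℝ) : (pp L).eval y = (y^2-1)^L := by simp [pp]

lemma deriv_pp (L : ℕ) : derivative (pp (L+1)) = (2*(L:ℝ[X]) + 2) * X * pp L := by
  rw [pp, derivative_pow]
  simp only [derivative_sub, derivative_one, derivative_X_pow, pp, map_add, map_one, map_natCast, map_ofNat]
  push_cast
  ring

lemma X2_deriv_pp (L : ℕ) : ((X:ℝ[X])^2-1) * derivative (pp L) =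
    (2*(L:ℝ[X])) * X * pp L := by
  cases L with
  | zero => simp [pp]
  | succ K =>
    rw [deriv_pp]
    have : pp (K+1) = pp K * ((X:ℝ[X])^2-1) := by rw [pp, pp, pow_succ]
    rw [this]
    push_cast
    ring

lemma R1 (L : ℕ) : ∀ n : ℕ, ((X:ℝ[X])^2 - 1) * derivative^[n+2] (pp L) =
    (2*(L:ℝ[X]) - 2*(n:ℝ[X]) - 2) * X * derivative^[n+1] (pp L)
    + ((n:ℝ[X])+1) * (2*(L:ℝ[X]) - (n:ℝ[X])) * derivative^[n] (pp L) := by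
  intro n
  induction n with
  | zero =>
    have h := congrArg derivative (X2_deriv_pp L)
    simp only [derivative_mul, derivative_sub, derivative_one, derivative_X,
      derivative_natCast, derivative_ofNat, map_add, map_one, map_natCast, map_ofNat, Function.iterate_succ_apply',
      Function.iterate_zero, id_eq, derivative_X_pow] at h ⊢
    push_cast at h ⊢
    linear_combination h
  | succ n ih =>
    have h := congrArg derivative ih
    simp only [derivative_mul, derivative_sub, derivative_add, derivative_one, derivative_X,
      derivative_natCast, derivative_ofNat, map_add, map_one, map_natCast, map_ofNat, Function.iterate_succ_apply',
      Function.iterate_zero, id_eq, derivative_X_pow] at h ⊢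
    push_cast at h ⊢
    linear_combination h

lemma R2 (K : ℕ) : ∀ n : ℕ, derivative^[n+2] (pp (K+1)) =
    (2*(K:ℝ[X]) + 2) * (X * derivative^[n+1] (pp K) + ((n:ℝ[X])+1) * derivative^[n] (pp K)) := by
  intro n
  induction n with
  | zero =>
    have h := congrArg derivative (deriv_pp K)
    simp only [derivative_mul, derivative_add, derivative_one, derivative_X,
      derivative_natCast, derivative_ofNat, map_add, map_one, map_natCast, map_ofNat,
      Function.iterate_succ_apply', Function.iterate_zero, id_eq] at h ⊢
    push_cast at h ⊢
    linear_combination h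
  | succ n ih =>
    have h := congrArg derivative ih
    simp only [derivative_mul, derivative_add, derivative_one, derivative_X,
      derivative_natCast, derivative_ofNat, map_add, map_one, map_natCast, map_ofNat,
      Function.iterate_succ_apply', Function.iterate_zero, id_eq] at h ⊢
    push_cast at h ⊢
    linear_combination h

lemma STlem (K : ℕ) : ∀ i : ℕ, i ≤ 2*K →
    (2*(K:ℝ[X]) + 1 - (i:ℝ[X])) * derivative^[i+1] (pp (K+1)) =
    (2*(K:ℝ[X]) + 2) * (((i:ℝ[X])+1) * X * derivative^[i] (pp K)
      + ((X:ℝ[X])^2 - 1) * derivative^[i+1] (pp K)) := by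
  intro i
  induction i with
  | zero =>
    intro _
    have h1 := deriv_pp K
    have h2 := X2_deriv_pp K
    simp only [Function.iterate_succ_apply', Function.iterate_zero, id_eq] at *
    push_cast
    linear_combination h1 * (2*(K:ℝ[X]) + 1) - (2*(K:ℝ[X]) + 2) * h2
  | succ i ih =>
    intro hi
    have hi' : i ≤ 2*K := by omega
    have h1 := congrArg derivative (ih hi')
    have h2 := R1 K i
    -- cancellation constant: 2K+1-(i+1) multiplied version
    have hc : ((2*(K:ℝ) + 1 - (i:ℝ)) : ℝ) ≠ 0 := by
      have : (i:ℝ) < 2*(K:ℝ) := by exact_mod_cast (by omega : i < 2*K)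
      intro h; nlinarith
    have key : C (2*(K:ℝ) + 1 - (i:ℝ)) * ((2*(K:ℝ[X]) + 1 - ((i:ℝ[X])+1)) * derivative^[i+1+1] (pp (K+1))) =
        C (2*(K:ℝ) + 1 - (i:ℝ)) * ((2*(K:ℝ[X]) + 2) * ((((i:ℝ[X])+1)+1) * X * derivative^[i+1] (pp K)
          + ((X:ℝ[X])^2 - 1) * derivative^[i+1+1] (pp K))) := by
      simp only [derivative_mul, derivative_add, derivative_sub, derivative_one, derivative_X,
        derivative_natCast, derivative_ofNat, map_add, map_one, map_natCast, map_ofNat, map_sub,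
        map_mul, Function.iterate_succ_apply', Function.iterate_zero, id_eq,
        derivative_X_pow] at h1 h2 ⊢
      push_cast at h1 h2 ⊢
      linear_combination (2*(K:ℝ[X]) - (i:ℝ[X])) * h1 - (2*(K:ℝ[X]) + 2) * h2
    have key2 := mul_left_cancel₀ (Polynomial.C_ne_zero.mpr hc) key
    push_cast at key2 ⊢
    convert key2 using 2 <;> push_cast <;> ring

end PolyAux

section AnalyticAux
open Polynomial Set

noncomputable def Acoef (k m : ℤ) : ℝ :=
  clm k m * ((-1:ℝ)^m / ((2:ℝ)^k * ((k.toNat).factorial : ℝ)))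

lemma iteratedDeriv_eval (P : ℝ[X]) : ∀ n : ℕ,
    iteratedDeriv n (fun y : ℝ => P.eval y) = fun x => (derivative^[n] P).eval x := by
  intro n
  induction n with
  | zero => simp
  | succ n ih =>
    rw [iteratedDeriv_succ, ih]
    funext x
    rw [Polynomial.deriv, Function.iterate_succ_apply']

lemma fun_eq_eval (l : ℤ) (hl : 0 ≤ l) :
    (fun y : ℝ => (y^2 - 1)^l) = fun y => (pp l.toNat).eval y := by
  funext y
  rw [pp_eval, ← zpow_natCast (y^2-1 : ℝ) l.toNat, Int.toNat_of_nonneg hl]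

lemma Ulm_eq (k m : ℤ) (hm : |m| ≤ k) : Ulm k m = fun y =>
    Acoef k m * ((1 - y^2) ^ ((m:ℝ)/2) *
      ((derivative^[(k+m).toNat] (pp k.toNat)).eval y)) := by
  have hk : 0 ≤ k := le_trans (abs_nonneg m) hm
  funext y
  rw [Ulm, if_pos hm, Plm, fun_eq_eval k hk, iteratedDeriv_eval]
  unfold Acoef
  ring

lemma hasDerivAt_Ulm (k m : ℤ) (hm : |m| ≤ k) (y : ℝ) (hy : y ∈ Set.Ioo (-1:ℝ) 1) :
    HasDerivAt (Ulm k m)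
      (Acoef k m * ((1 - y^2) ^ ((m:ℝ)/2 - 1) *
        ((1-y^2) * (derivative^[(k+m).toNat + 1] (pp k.toNat)).eval y
          - (m:ℝ) * y * (derivative^[(k+m).toNat] (pp k.toNat)).eval y))) y := by
  have ht : (0:ℝ) < 1 - y^2 := by nlinarith [hy.1, hy.2]
  rw [Ulm_eq k m hm]
  have h1 : HasDerivAt (fun y : ℝ => 1 - y^2) (-(2*y)) y := by
    simpa using ((hasDerivAt_pow 2 y).const_sub 1)
  have h2 := h1.rpow_const (p := (m:ℝ)/2) (Or.inl ht.ne')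
  have h3 : HasDerivAt (fun y : ℝ => (derivative^[(k+m).toNat] (pp k.toNat)).eval y)
      ((derivative^[(k+m).toNat + 1] (pp k.toNat)).eval y) y := by
    rw [Function.iterate_succ_apply']
    exact Polynomial.hasDerivAt _ y
  have h4 := (h2.mul h3).const_mul (Acoef k m)
  refine h4.congr_deriv ?_
  have e : (1-y^2) ^ ((m:ℝ)/2) = (1-y^2) ^ ((m:ℝ)/2 - 1) * (1-y^2) := by
    rw [← Real.rpow_add_one ht.ne' ((m:ℝ)/2 - 1)]; norm_num
  rw [e]; ring

lemma Flm_eq_on (k m : ℤ) (hm : |m| ≤ k) (y : ℝ) (hy : y ∈ Set.Ioo (-1:ℝ) 1) :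
    Flm k m y = (Acoef k m / Real.sqrt ((k:ℝ) * ((k:ℝ)+1))) *
      ((1 - y^2) ^ (((m:ℝ)-1)/2) *
        ((1-y^2) * (derivative^[(k+m).toNat + 1] (pp k.toNat)).eval y
          - (m:ℝ) * (y+1) * (derivative^[(k+m).toNat] (pp k.toNat)).eval y)) := by
  have ht : (0:ℝ) < 1 - y^2 := by nlinarith [hy.1, hy.2]
  have hs : Real.sqrt (1 - y^2) ≠ 0 := by positivity
  have hss : Real.sqrt (1-y^2) * Real.sqrt (1-y^2) = 1 - y^2 := Real.mul_self_sqrt ht.le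
  rw [Flm, (hasDerivAt_Ulm k m hm y hy).deriv, Ulm_eq k m hm]
  have e1 : (1-y^2) ^ ((m:ℝ)/2 - 1) = (1-y^2) ^ ((m:ℝ)/2) / (1-y^2) := by
    rw [Real.rpow_sub ht, Real.rpow_one]
  have e2 : (1-y^2) ^ (((m:ℝ)-1)/2) = (1-y^2) ^ ((m:ℝ)/2) / Real.sqrt (1-y^2) := by
    rw [show ((m:ℝ)-1)/2 = (m:ℝ)/2 - 1/2 by ring, Real.rpow_sub ht, ← Real.sqrt_eq_rpow]
  rw [e1, e2]
  set P := (1-y^2) ^ ((m:ℝ)/2) with hP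
  set G0 := (derivative^[(k+m).toNat] (pp k.toNat)).eval y
  set G1 := (derivative^[(k+m).toNat + 1] (pp k.toNat)).eval y
  set s := Real.sqrt (1-y^2) with hsdef
  set c := Real.sqrt ((k:ℝ) * ((k:ℝ)+1))
  have key : Real.sqrt (1-y^2) * (Acoef k m * (P / (1-y^2) * ((1-y^2) * G1 - (m:ℝ)*y*G0)))
      - (m:ℝ)/Real.sqrt (1-y^2) * (Acoef k m * (P * G0))
      = Acoef k m * (P / Real.sqrt (1-y^2) * ((1-y^2)*G1 - (m:ℝ)*(y+1)*G0)) := by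
    have hs0 : 0 ≤ s := Real.sqrt_nonneg _
    rw [← hss]
    field_simp
    rw [Real.sqrt_sq hs0]
    ring
  rw [key]
  ring


end AnalyticAux

section Master
open Polynomial Set

lemma Flm_deriv_master (l m : ℤ) (hm : |m| ≤ l) (x : ℝ) (hx : x ∈ Set.Ioo (-1:ℝ) 1) :
    (1 - x^2) * deriv (Flm l m) x =
      (Acoef l m / Real.sqrt ((l:ℝ) * ((l:ℝ)+1))) * ((1-x^2) ^ (((m:ℝ)-1)/2)) *
        (-((m:ℝ)-1) * x * ((1-x^2) * (derivative^[(l+m).toNat + 1] (pp l.toNat)).eval x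
            - (m:ℝ)*(x+1) * (derivative^[(l+m).toNat] (pp l.toNat)).eval x)
         + (1-x^2) * ((1-x^2) * (derivative^[(l+m).toNat + 2] (pp l.toNat)).eval x
            - 2*x*(derivative^[(l+m).toNat + 1] (pp l.toNat)).eval x
            - (m:ℝ) * (derivative^[(l+m).toNat] (pp l.toNat)).eval x
            - (m:ℝ)*(x+1) * (derivative^[(l+m).toNat + 1] (pp l.toNat)).eval x)) := by
  have ht : (0:ℝ) < 1 - x^2 := by nlinarith [hx.1, hx.2]
  set nn := (l+m).toNat
  set C0 := Acoef l m / Real.sqrt ((l:ℝ) * ((l:ℝ)+1)) with hC0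
  set nice := fun y : ℝ => C0 * ((1 - y^2) ^ (((m:ℝ)-1)/2) *
      ((1-y^2) * (derivative^[nn + 1] (pp l.toNat)).eval y
        - (m:ℝ) * (y+1) * (derivative^[nn] (pp l.toNat)).eval y)) with hnice
  have hDeq : deriv (Flm l m) x = deriv nice x := by
    apply Filter.EventuallyEq.deriv_eq
    filter_upwards [isOpen_Ioo.mem_nhds hx] with y hy
    exact Flm_eq_on l m hm y hy
  have h1 : HasDerivAt (fun y : ℝ => 1 - y^2) (-(2*x)) x := by
    simpa using ((hasDerivAt_pow 2 x).const_sub 1)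
  have h2 := h1.rpow_const (p := ((m:ℝ)-1)/2) (Or.inl ht.ne')
  have hq0 : HasDerivAt (fun y : ℝ => (derivative^[nn] (pp l.toNat)).eval y)
      ((derivative^[nn + 1] (pp l.toNat)).eval x) x := by
    have h := Polynomial.hasDerivAt (derivative^[nn] (pp l.toNat)) x
    rwa [← Function.iterate_succ_apply' derivative nn] at h
  have hq1 : HasDerivAt (fun y : ℝ => (derivative^[nn+1] (pp l.toNat)).eval y)
      ((derivative^[nn + 2] (pp l.toNat)).eval x) x := by
    have h := Polynomial.hasDerivAt (derivative^[nn+1] (pp l.toNat)) x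
    rwa [← Function.iterate_succ_apply' derivative (nn+1)] at h
  have hlin : HasDerivAt (fun y : ℝ => (m:ℝ) * (y+1)) (m:ℝ) x := by
    simpa using ((hasDerivAt_id x).add_const 1).const_mul (m:ℝ)
  have hin : HasDerivAt (fun y : ℝ => (1-y^2) * (derivative^[nn+1] (pp l.toNat)).eval y
      - (m:ℝ) * (y+1) * (derivative^[nn] (pp l.toNat)).eval y)
      ((-(2*x)) * (derivative^[nn+1] (pp l.toNat)).eval x
        + (1-x^2) * (derivative^[nn+2] (pp l.toNat)).eval x
        - ((m:ℝ) * (derivative^[nn] (pp l.toNat)).eval x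
            + (m:ℝ)*(x+1) * (derivative^[nn+1] (pp l.toNat)).eval x)) x :=
    (h1.mul hq1).sub (hlin.mul hq0)
  have hN : HasDerivAt nice (C0 *
      ((-(2*x) * (((m:ℝ)-1)/2) * (1-x^2) ^ (((m:ℝ)-1)/2 - 1)) *
        ((1-x^2) * (derivative^[nn+1] (pp l.toNat)).eval x
          - (m:ℝ)*(x+1) * (derivative^[nn] (pp l.toNat)).eval x)
       + (1-x^2) ^ (((m:ℝ)-1)/2) *
        ((-(2*x)) * (derivative^[nn+1] (pp l.toNat)).eval x
          + (1-x^2) * (derivative^[nn+2] (pp l.toNat)).eval x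
          - ((m:ℝ) * (derivative^[nn] (pp l.toNat)).eval x
              + (m:ℝ)*(x+1) * (derivative^[nn+1] (pp l.toNat)).eval x)))) x :=
    (h2.mul hin).const_mul C0
  rw [hDeq, hN.deriv]
  have e : (1-x^2) * (1-x^2) ^ (((m:ℝ)-1)/2 - 1) = (1-x^2) ^ (((m:ℝ)-1)/2) := by
    rw [mul_comm, ← Real.rpow_add_one ht.ne' (((m:ℝ)-1)/2 - 1)]; norm_num
  calc (1-x^2) * (C0 * ((-(2*x) * (((m:ℝ)-1)/2) * (1-x^2) ^ (((m:ℝ)-1)/2 - 1)) *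
        ((1-x^2) * (derivative^[nn+1] (pp l.toNat)).eval x
          - (m:ℝ)*(x+1) * (derivative^[nn] (pp l.toNat)).eval x)
       + (1-x^2) ^ (((m:ℝ)-1)/2) *
        ((-(2*x)) * (derivative^[nn+1] (pp l.toNat)).eval x
          + (1-x^2) * (derivative^[nn+2] (pp l.toNat)).eval x
          - ((m:ℝ) * (derivative^[nn] (pp l.toNat)).eval x
              + (m:ℝ)*(x+1) * (derivative^[nn+1] (pp l.toNat)).eval x))))
      = C0 * (((1-x^2) * (1-x^2) ^ (((m:ℝ)-1)/2 - 1)) * ((-(2*x) * (((m:ℝ)-1)/2)) *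
        ((1-x^2) * (derivative^[nn+1] (pp l.toNat)).eval x
          - (m:ℝ)*(x+1) * (derivative^[nn] (pp l.toNat)).eval x))
       + (1-x^2) ^ (((m:ℝ)-1)/2) * ((1-x^2) *
        ((-(2*x)) * (derivative^[nn+1] (pp l.toNat)).eval x
          + (1-x^2) * (derivative^[nn+2] (pp l.toNat)).eval x
          - ((m:ℝ) * (derivative^[nn] (pp l.toNat)).eval x
              + (m:ℝ)*(x+1) * (derivative^[nn+1] (pp l.toNat)).eval x)))) := by ring
    _ = _ := by rw [e]; ring

end Master

section CI

set_option maxHeartbeats 2000000 in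
lemma const_ident (l m : ℤ) (hl : 2 ≤ l) (hm : |m| ≤ l - 1) :
    (2*(l:ℝ)+1) * zetalm l m * (Acoef (l-1) m / Real.sqrt (((l-1 : ℤ):ℝ) * (((l-1 : ℤ):ℝ)+1))) =
    2 * (Acoef l m / Real.sqrt ((l:ℝ)*((l:ℝ)+1))) * ((l:ℝ)+1) * ((l:ℝ)+(m:ℝ)) := by
  have hm1 : -(l-1) ≤ m := (abs_le.mp hm).1
  have hm2 : m ≤ l - 1 := (abs_le.mp hm).2
  have hlr : (2:ℝ) ≤ (l:ℝ) := by exact_mod_cast hl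
  have hmu1 : -((l:ℝ)-1) ≤ (m:ℝ) := by
    have : ((-(l-1) : ℤ):ℝ) ≤ ((m:ℤ):ℝ) := by exact_mod_cast hm1
    push_cast at this; linarith
  have hmu2 : (m:ℝ) ≤ (l:ℝ)-1 := by
    have : ((m:ℤ):ℝ) ≤ ((l-1 : ℤ):ℝ) := by exact_mod_cast hm2
    push_cast at this; linarith
  -- factorial and power abbreviations
  set ℓ := (l:ℝ) with hldef
  set μ := (m:ℝ) with hmdef
  have hfb : (((l+m).toNat.factorial : ℕ) : ℝ) = (ℓ+μ) * (((l-1+m).toNat.factorial : ℕ) : ℝ) := by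
    have h1 : (l+m).toNat = (l-1+m).toNat + 1 := by omega
    rw [h1, Nat.factorial_succ]
    have h2 : (((l-1+m).toNat : ℕ) : ℝ) = ℓ + μ - 1 := by
      have : ((l-1+m).toNat : ℤ) = l-1+m := Int.toNat_of_nonneg (by omega)
      have := congrArg (fun z : ℤ => (z : ℝ)) this
      push_cast at this; linarith
    push_cast
    rw [h2]; ring
  have hfa : (((l-m).toNat.factorial : ℕ) : ℝ) = (ℓ-μ) * (((l-1-m).toNat.factorial : ℕ) : ℝ) := by
    have h1 : (l-m).toNat = (l-1-m).toNat + 1 := by omega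
    rw [h1, Nat.factorial_succ]
    have h2 : (((l-1-m).toNat : ℕ) : ℝ) = ℓ - μ - 1 := by
      have : ((l-1-m).toNat : ℤ) = l-1-m := Int.toNat_of_nonneg (by omega)
      have := congrArg (fun z : ℤ => (z : ℝ)) this
      push_cast at this; linarith
    push_cast
    rw [h2]; ring
  have hfl : ((l.toNat.factorial : ℕ) : ℝ) = ℓ * (((l-1).toNat.factorial : ℕ) : ℝ) := by
    have h1 : l.toNat = (l-1).toNat + 1 := by omega
    rw [h1, Nat.factorial_succ]
    have h2 : (((l-1).toNat : ℕ) : ℝ) = ℓ - 1 := by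
      have : ((l-1).toNat : ℤ) = l-1 := Int.toNat_of_nonneg (by omega)
      have := congrArg (fun z : ℤ => (z : ℝ)) this
      push_cast at this; linarith
    push_cast
    rw [h2]; ring
  have hzp : (2:ℝ)^l = (2:ℝ)^(l-1) * 2 := by
    rw [show l = (l-1) + 1 by ring, zpow_add_one₀ (by norm_num : (2:ℝ) ≠ 0)]
    ring_nf
  -- positivity facts
  have hfb' : (0:ℝ) < (((l-1+m).toNat.factorial : ℕ) : ℝ) := by exact_mod_cast Nat.factorial_pos _
  have hfa' : (0:ℝ) < (((l-1-m).toNat.factorial : ℕ) : ℝ) := by exact_mod_cast Nat.factorial_pos _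
  have hfl' : (0:ℝ) < (((l-1).toNat.factorial : ℕ) : ℝ) := by exact_mod_cast Nat.factorial_pos _
  have hz : (0:ℝ) < (2:ℝ)^(l-1) := by positivity
  have hs : ((-1:ℝ)^m) ≠ 0 := by
    rcases Int.even_or_odd m with he | ho
    · rw [he.neg_one_zpow]; norm_num
    · rw [ho.neg_one_zpow]; norm_num
  -- reduce to positive parts
  unfold Acoef zetalm clm
  push_cast
  set fa' := (((l-1-m).toNat.factorial : ℕ) : ℝ)
  set fb' := (((l-1+m).toNat.factorial : ℕ) : ℝ)
  set fl' := (((l-1).toNat.factorial : ℕ) : ℝ)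
  rw [hfa, hfb, hfl, hzp]
  set z := (2:ℝ)^(l-1)
  set X₀ := (2*ℓ+1) * ((1/ℓ) * Real.sqrt ((ℓ+1)*(ℓ-1)*(ℓ+μ)*(ℓ-μ)/((2*ℓ+1)*(2*ℓ-1)))) *
      (Real.sqrt ((2*(ℓ-1)+1)/2 * fa' / fb') / (z * fl' * Real.sqrt ((ℓ-1)*((ℓ-1)+1)))) with hX
  set Y₀ := 2 * (Real.sqrt ((2*ℓ+1)/2 * ((ℓ-μ)*fa') / ((ℓ+μ)*fb')) / ((z*2) * (ℓ*fl') * Real.sqrt (ℓ*(ℓ+1)))) * (ℓ+1) * (ℓ+μ) with hY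
  have key : X₀ = Y₀ := by
    have hlp : (0:ℝ) < ℓ := by linarith
    have h1 : 0 ≤ X₀ := by
      rw [hX]
      apply mul_nonneg (mul_nonneg (by linarith) (mul_nonneg (by positivity) (Real.sqrt_nonneg _)))
      exact div_nonneg (Real.sqrt_nonneg _)
        (mul_nonneg (mul_nonneg hz.le hfl'.le) (Real.sqrt_nonneg _))
    have h2 : 0 ≤ Y₀ := by
      rw [hY]
      apply mul_nonneg (mul_nonneg _ (by linarith)) (by linarith)
      apply mul_nonneg (by norm_num)
      exact div_nonneg (Real.sqrt_nonneg _)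
        (mul_nonneg (mul_nonneg (by linarith) (mul_nonneg hlp.le hfl'.le)) (Real.sqrt_nonneg _))
    have r1 : (0:ℝ) ≤ (ℓ+1)*(ℓ-1)*(ℓ+μ)*(ℓ-μ) :=
      mul_nonneg (mul_nonneg (mul_nonneg (by linarith) (by linarith)) (by linarith)) (by linarith)
    have hsq : X₀^2 = Y₀^2 := by
      rw [hX, hY]
      simp only [mul_pow, div_pow, one_pow]
      rw [Real.sq_sqrt (div_nonneg r1 (by nlinarith)),
        Real.sq_sqrt (div_nonneg (mul_nonneg (by linarith) (mul_nonneg (by linarith) hfa'.le))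
          (mul_nonneg (by linarith) hfb'.le)),
        Real.sq_sqrt (div_nonneg (mul_nonneg (by linarith) hfa'.le) hfb'.le),
        Real.sq_sqrt (by nlinarith : (0:ℝ) ≤ (ℓ-1)*((ℓ-1)+1)),
        Real.sq_sqrt (by nlinarith : (0:ℝ) ≤ ℓ*(ℓ+1))]
      have d1 : (ℓ:ℝ) ≠ 0 := by linarith
      have d2 : (ℓ+1) ≠ 0 := by linarith
      have d3 : (ℓ-1) ≠ 0 := by linarith
      have d4 : (2*ℓ+1) ≠ 0 := by linarith
      have d5 : (2*ℓ-1) ≠ 0 := by linarith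
      have d6 : (ℓ+μ) ≠ 0 := by linarith
      have d7 : fa' ≠ 0 := ne_of_gt hfa'
      have d8 : fb' ≠ 0 := ne_of_gt hfb'
      have d9 : fl' ≠ 0 := ne_of_gt hfl'
      have d10 : z ≠ 0 := ne_of_gt hz
      field_simp
      linear_combination (μ - 2*ℓ*μ - ℓ + 2*ℓ^2) * mul_inv_cancel₀ d1
    calc X₀ = Real.sqrt (X₀^2) := by rw [Real.sqrt_sq h1]
      _ = Real.sqrt (Y₀^2) := by rw [hsq]
      _ = Y₀ := Real.sqrt_sq h2
  calc (2*ℓ+1) * ((1/ℓ) * Real.sqrt ((ℓ+1)*(ℓ-1)*(ℓ+μ)*(ℓ-μ)/((2*ℓ+1)*(2*ℓ-1)))) *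
      (Real.sqrt ((2*(ℓ-1)+1)/2 * fa' / fb') * ((-1:ℝ)^m / (z * fl')) / Real.sqrt ((ℓ-1)*((ℓ-1)+1)))
      = (-1:ℝ)^m * X₀ := by rw [hX]; ring
    _ = (-1:ℝ)^m * Y₀ := by rw [key]
    _ = 2 * (Real.sqrt ((2*ℓ+1)/2 * ((ℓ-μ)*fa') / ((ℓ+μ)*fb')) * ((-1:ℝ)^m / (z*2 * (ℓ*fl'))) / Real.sqrt (ℓ*(ℓ+1))) * (ℓ+1) * (ℓ+μ) := by rw [hY]; ring

end CI


open Polynomial Set in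
set_option maxHeartbeats 2000000 in
/-- Derivative recurrence (lowering form) for `F_{lm}`.  (With the definition used
here, `F_{l'm} = 0` automatically whenever `l' < max(1, |m|)`.) -/
theorem Flm_deriv_recurrence_lower (l m : ℤ) (hl : 1 ≤ l) (hm₁ : -l ≤ m) (hm₂ : m ≤ l)
    (x : ℝ) (hx : x ∈ Set.Ioo (-1 : ℝ) 1) :
    (1 - x ^ 2) * deriv (Flm l m) x =
      -(l : ℝ) * (x - (m : ℝ) / (l : ℝ) ^ 2) * Flm l m x +
        (2 * (l : ℝ) + 1) * zetalm l m * Flm (l - 1) m x := by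
  have hm : |m| ≤ l := abs_le.mpr ⟨hm₁, hm₂⟩
  have ht : (0:ℝ) < 1 - x^2 := by
    have h1 := hx.1; have h2 := hx.2; nlinarith
  have hl0 : ((l:ℝ)) ≠ 0 := by
    exact_mod_cast (by omega : l ≠ 0)
  have cL : ((l.toNat : ℕ) : ℝ) = (l:ℝ) := by
    have h : ((l.toNat : ℕ) : ℤ) = l := Int.toNat_of_nonneg (by omega)
    exact_mod_cast congrArg (fun z : ℤ => (z:ℝ)) h
  have cnn : (((l+m).toNat : ℕ) : ℝ) = (l:ℝ)+(m:ℝ) := by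
    have h : (((l+m).toNat : ℕ) : ℤ) = l + m := Int.toNat_of_nonneg (by omega)
    have h2 := congrArg (fun z : ℤ => (z:ℝ)) h
    push_cast at h2
    exact h2
  have hT := Flm_deriv_master l m hm x hx
  have hF := Flm_eq_on l m hm x hx
  have R1e : (1-x^2) * (derivative^[(l+m).toNat + 2] (pp l.toNat)).eval x
      = 2*((m:ℝ)+1)*x*(derivative^[(l+m).toNat + 1] (pp l.toNat)).eval x
        - ((l:ℝ)+(m:ℝ)+1)*((l:ℝ)-(m:ℝ))*(derivative^[(l+m).toNat] (pp l.toNat)).eval x := by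
    have h := congrArg (Polynomial.eval x) (R1 l.toNat (l+m).toNat)
    simp only [eval_mul, eval_add, eval_sub, eval_pow, eval_one, eval_X, eval_natCast,
      eval_ofNat] at h
    rw [cL, cnn] at h
    linear_combination -h
  by_cases hml : m = l
  · -- top boundary case m = l
    subst hml
    have hdeg : (pp m.toNat).natDegree = 2 * m.toNat := by
      rw [pp, natDegree_pow,
        show ((X:ℝ[X])^2 - 1) = (X:ℝ[X])^2 - Polynomial.C 1 by rw [map_one],
        natDegree_X_pow_sub_C]
      ring
    have hz1 : (derivative^[(m+m).toNat + 1] (pp m.toNat)) = 0 := by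
      apply Polynomial.iterate_derivative_eq_zero
      rw [hdeg]; omega
    have hz2 : (derivative^[(m+m).toNat + 2] (pp m.toNat)) = 0 := by
      apply Polynomial.iterate_derivative_eq_zero
      rw [hdeg]; omega
    have hzeta : zetalm m m = 0 := by
      unfold zetalm
      rw [show ((m:ℝ)+1)*((m:ℝ)-1)*((m:ℝ)+(m:ℝ))*((m:ℝ)-(m:ℝ))/((2*(m:ℝ)+1)*(2*(m:ℝ)-1))
          = 0 by ring]
      simp
    rw [hT, hF, hzeta, hz1, hz2]
    simp only [eval_zero]
    field_simp
    ring
  · by_cases hmnl : m = -l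
    · -- bottom boundary case m = -l
      subst hmnl
      have hzeta : zetalm l (-l) = 0 := by
        unfold zetalm
        have e : (l:ℝ) + ((-l : ℤ):ℝ) = 0 := by push_cast; ring
        rw [e, mul_zero, zero_mul, zero_div, Real.sqrt_zero, mul_zero]
      have hnn0 : (l + -l).toNat = 0 := by omega
      rw [hT, hF, hzeta, hnn0]
      simp only [zero_add, Function.iterate_one, Function.iterate_zero, id_eq] at R1e ⊢
      rw [hnn0] at R1e
      simp only [zero_add, Function.iterate_one, Function.iterate_zero, id_eq] at R1e
      have hx2e : (1-x^2) * (derivative (pp l.toNat)).eval x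
          = -(2*(l:ℝ)*x*((pp l.toNat).eval x)) := by
        have h := congrArg (Polynomial.eval x) (X2_deriv_pp l.toNat)
        simp only [eval_mul, eval_add, eval_sub, eval_pow, eval_one, eval_X, eval_natCast,
          eval_ofNat] at h
        rw [cL] at h
        linear_combination -h
      have hg2 : (derivative^[2] (pp l.toNat)).eval x
          = (2*(((-l:ℤ):ℝ)+1)*x*(derivative (pp l.toNat)).eval x
             - ((l:ℝ)+((-l:ℤ):ℝ)+1)*((l:ℝ)-((-l:ℤ):ℝ))*((pp l.toNat).eval x))/(1-x^2) := by
        rw [eq_div_iff ht.ne']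
        linear_combination R1e
      have hg1 : (derivative (pp l.toNat)).eval x
          = -(2*(l:ℝ)*x*((pp l.toNat).eval x))/(1-x^2) := by
        rw [eq_div_iff ht.ne']
        linear_combination hx2e
      rw [hg2, hg1]
      push_cast
      field_simp
      ring
    · -- main case |m| ≤ l - 1
      have hm' : |m| ≤ l - 1 := abs_le.mpr ⟨by omega, by omega⟩
      have hlm0 : (l:ℝ) - (m:ℝ) ≠ 0 := by
        have h : ((m:ℤ):ℝ) ≤ ((l-1 : ℤ):ℝ) := by exact_mod_cast (abs_le.mp hm').2
        push_cast at h
        intro hc; linarith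
      have hK1 : (l-1).toNat + 1 = l.toNat := by omega
      have hnm1 : ((l-1)+m).toNat + 1 = (l+m).toNat := by omega
      have hguard : ((l-1)+m).toNat ≤ 2 * (l-1).toNat := by omega
      have cK : (((l-1).toNat : ℕ) : ℝ) = (l:ℝ) - 1 := by
        have h : (((l-1).toNat : ℕ) : ℤ) = l - 1 := Int.toNat_of_nonneg (by omega)
        have h2 := congrArg (fun z : ℤ => (z:ℝ)) h
        push_cast at h2
        exact h2
      have cnm : ((((l-1)+m).toNat : ℕ) : ℝ) = (l:ℝ)+(m:ℝ)-1 := by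
        have h : ((((l-1)+m).toNat : ℕ) : ℤ) = (l-1) + m := Int.toNat_of_nonneg (by omega)
        have h2 := congrArg (fun z : ℤ => (z:ℝ)) h
        push_cast at h2
        linarith
      have hidx1 : derivative^[((l-1)+m).toNat + 1] (pp l.toNat)
          = derivative^[(l+m).toNat] (pp l.toNat) := by rw [hnm1]
      have hidx2 : derivative^[((l-1)+m).toNat + 2] (pp l.toNat)
          = derivative^[(l+m).toNat + 1] (pp l.toNat) := by
        rw [show ((l-1)+m).toNat + 2 = (l+m).toNat + 1 by omega]
      have hSTe : ((l:ℝ)-(m:ℝ)) * (derivative^[(l+m).toNat] (pp l.toNat)).eval x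
          = 2*(l:ℝ)*(((l:ℝ)+(m:ℝ))*x*(derivative^[((l-1)+m).toNat] (pp (l-1).toNat)).eval x
            - (1-x^2)*(derivative^[((l-1)+m).toNat + 1] (pp (l-1).toNat)).eval x) := by
        have h := congrArg (Polynomial.eval x) (STlem (l-1).toNat ((l-1)+m).toNat hguard)
        rw [hK1, hidx1] at h
        simp only [eval_mul, eval_add, eval_sub, eval_pow, eval_one, eval_X, eval_natCast,
          eval_ofNat] at h
        rw [cK, cnm] at h
        linear_combination h
      have hR2e : (derivative^[(l+m).toNat + 1] (pp l.toNat)).eval x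
          = 2*(l:ℝ)*(x*(derivative^[((l-1)+m).toNat + 1] (pp (l-1).toNat)).eval x
            + ((l:ℝ)+(m:ℝ))*(derivative^[((l-1)+m).toNat] (pp (l-1).toNat)).eval x) := by
        have h := congrArg (Polynomial.eval x) (R2 (l-1).toNat ((l-1)+m).toNat)
        rw [hK1, hidx2] at h
        simp only [eval_mul, eval_add, eval_sub, eval_pow, eval_one, eval_X, eval_natCast,
          eval_ofNat] at h
        rw [cK, cnm] at h
        linear_combination h
      have hG0 : (derivative^[(l+m).toNat] (pp l.toNat)).eval x
          = 2*(l:ℝ)*(((l:ℝ)+(m:ℝ))*x*(derivative^[((l-1)+m).toNat] (pp (l-1).toNat)).eval x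
            - (1-x^2)*(derivative^[((l-1)+m).toNat + 1] (pp (l-1).toNat)).eval x)
            / ((l:ℝ)-(m:ℝ)) := by
        rw [eq_div_iff hlm0]
        linear_combination hSTe
      have hG2 : (derivative^[(l+m).toNat + 2] (pp l.toNat)).eval x
          = (2*((m:ℝ)+1)*x*(derivative^[(l+m).toNat + 1] (pp l.toNat)).eval x
             - ((l:ℝ)+(m:ℝ)+1)*((l:ℝ)-(m:ℝ))*(derivative^[(l+m).toNat] (pp l.toNat)).eval x)
            / (1-x^2) := by
        rw [eq_div_iff ht.ne']
        linear_combination R1e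
      have hFlm1 := Flm_eq_on (l-1) m hm' x hx
      have h2 : (2*(l:ℝ)+1) * zetalm l m * Flm (l-1) m x
          = 2 * (Acoef l m / Real.sqrt ((l:ℝ)*((l:ℝ)+1))) * ((l:ℝ)+1) * ((l:ℝ)+(m:ℝ)) *
            ((1-x^2) ^ (((m:ℝ)-1)/2) *
              ((1-x^2)*(derivative^[((l-1)+m).toNat + 1] (pp (l-1).toNat)).eval x
                - (m:ℝ)*(x+1)*(derivative^[((l-1)+m).toNat] (pp (l-1).toNat)).eval x)) := by
        rw [hFlm1]
        rcases lt_or_ge l 2 with hl2 | hl2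
        · -- l = 1, m = 0
          have hm0 : m = 0 := by omega
          have hK0 : (l-1).toNat = 0 := by omega
          have hppK : pp (l-1).toNat = 1 := by rw [hK0, pp, pow_zero]
          have hH1 : (derivative^[((l-1)+m).toNat + 1] (pp (l-1).toNat)).eval x = 0 := by
            rw [hppK, Polynomial.iterate_derivative_eq_zero
              (by simp [natDegree_one] : (1:ℝ[X]).natDegree < ((l-1)+m).toNat + 1)]
            simp
          rw [hH1, hm0]
          push_cast
          ring
        · linear_combination ((1-x^2) ^ (((m:ℝ)-1)/2) *
            ((1-x^2)*(derivative^[((l-1)+m).toNat + 1] (pp (l-1).toNat)).eval x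
              - (m:ℝ)*(x+1)*(derivative^[((l-1)+m).toNat] (pp (l-1).toNat)).eval x)) *
            const_ident l m hl2 hm' 
      rw [hT, hF, h2, hG2, hR2e, hG0]
      field_simp
      ring
end
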